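/- arXiv:1010.4522 — 4 statements merged into one kernel-verified Lean document; each statement's English description precedes it below -/
import Mathlib

section
/- There exists a random normed module (E,‖·‖) over ℂ with base ([0,1], Lebesgue σ-algebra, Lebesgue measure), lacking the countable concatenation property, together with f ∈ E*, ξ ∈ L⁰, β ∈ L⁰₊ such that |λξ| ≤ β‖λf‖* for all λ ∈ L⁰(𝓕,ℂ), yet no x ∈ E satisfies f(x) = ξ. Concretely, one can take E to be the L⁰-submodule of L⁰(𝓕,ℂ) generated by finite L⁰-linear combinations of the indicators Ĩ_{[2^{-(n+1)}, 2^{-n}]} (n ∈ ℕ), ‖η‖ = |η|, f = identity, ξ = β = 1 (the constant function 1). -/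
open MeasureTheory

noncomputable instance AEEqFun.instCommRing' {α γ : Type*} [MeasurableSpace α] {μ : Measure α}
    [TopologicalSpace γ] [CommRing γ] [IsTopologicalRing γ] : CommRing (α →ₘ[μ] γ) :=
  { (inferInstance : AddCommGroup (α →ₘ[μ] γ)),
    (inferInstance : CommMonoid (α →ₘ[μ] γ)) with
    left_distrib := fun f g h => by
      apply AEEqFun.ext
      filter_upwards [AEEqFun.coeFn_mul f (g + h), AEEqFun.coeFn_add g h,
        AEEqFun.coeFn_mul f g, AEEqFun.coeFn_mul f h,
        AEEqFun.coeFn_add (f * g) (f * h)] with a h1 h2 h3 h4 h5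
      simp only [Pi.mul_apply, Pi.add_apply] at *
      rw [h1, h2, h5, h3, h4, mul_add]
    right_distrib := fun f g h => by
      apply AEEqFun.ext
      filter_upwards [AEEqFun.coeFn_mul (f + g) h, AEEqFun.coeFn_add f g,
        AEEqFun.coeFn_mul f h, AEEqFun.coeFn_mul g h,
        AEEqFun.coeFn_add (f * h) (g * h)] with a h1 h2 h3 h4 h5
      simp only [Pi.mul_apply, Pi.add_apply] at *
      rw [h1, h2, h5, h3, h4, add_mul]
    zero_mul := fun f => by
      apply AEEqFun.ext
      filter_upwards [AEEqFun.coeFn_mul 0 f, AEEqFun.coeFn_zero (α := α) (μ := μ) (β := γ)]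
        with a h1 h2
      simp only [Pi.mul_apply] at *
      rw [h1, h2]
      simp
    mul_zero := fun f => by
      apply AEEqFun.ext
      filter_upwards [AEEqFun.coeFn_mul f 0, AEEqFun.coeFn_zero (α := α) (μ := μ) (β := γ)]
        with a h1 h2
      simp only [Pi.mul_apply] at *
      rw [h1, h2]
      simp }

namespace RNM

variable {Ω : Type} [MeasurableSpace Ω] {P : Measure Ω}

/-- the pointwise absolute value `L⁰(𝓕,ℂ) → L⁰(𝓕,ℝ)`. -/
noncomputable def L0abs (ξ : Ω →ₘ[P] ℂ) : Ω →ₘ[P] ℝ :=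
  ξ.comp (fun z => ‖z‖) continuous_norm

/-- the canonical embedding `L⁰(𝓕,ℝ) → L⁰(𝓕,ℂ)`. -/
noncomputable def ofRealC (ξ : Ω →ₘ[P] ℝ) : Ω →ₘ[P] ℂ :=
  ξ.comp Complex.ofReal Complex.continuous_ofReal

/-- pointwise complex conjugation on `L⁰(𝓕,ℂ)`. -/
noncomputable def conjC (ξ : Ω →ₘ[P] ℂ) : Ω →ₘ[P] ℂ :=
  ξ.comp (fun z => starRingEnd ℂ z) Complex.continuous_conj

/-- `ξ ∈ L⁰₊₊`, i.e. `ξ > 0` a.e. on `Ω`. -/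
def L0pos (ξ : Ω →ₘ[P] ℝ) : Prop := ∀ᵐ ω ∂P, 0 < ξ ω

/-- `ξ < η` (a.e.) on the whole of `Ω`. -/
def ltAE (ξ η : Ω →ₘ[P] ℝ) : Prop := ∀ᵐ ω ∂P, ξ ω < η ω

/-- the equivalence class `Ĩ_A ∈ L⁰(𝓕,ℂ)` of the indicator of a measurable set `A`. -/
noncomputable def indC (A : Set Ω) (hA : MeasurableSet A) : Ω →ₘ[P] ℂ :=
  AEEqFun.mk (A.indicator fun _ => (1 : ℂ)) (aestronglyMeasurable_const.indicator hA)

/-- the equivalence class `Ĩ_A ∈ L⁰(𝓕,ℝ)` of the indicator of a measurable set `A`. -/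
noncomputable def indR (A : Set Ω) (hA : MeasurableSet A) : Ω →ₘ[P] ℝ :=
  AEEqFun.mk (A.indicator fun _ => (1 : ℝ)) (aestronglyMeasurable_const.indicator hA)

section AELemmas

lemma L0abs_ae (ξ : Ω →ₘ[P] ℂ) : ∀ᵐ ω ∂P, (L0abs ξ) ω = ‖ξ ω‖ :=
  AEEqFun.coeFn_comp _ _ ξ

lemma le_ae {ξ η : Ω →ₘ[P] ℝ} (h : ξ ≤ η) : ∀ᵐ ω ∂P, ξ ω ≤ η ω :=
  AEEqFun.coeFn_le.2 h

lemma le_of_ae {ξ η : Ω →ₘ[P] ℝ} (h : ∀ᵐ ω ∂P, ξ ω ≤ η ω) : ξ ≤ η :=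
  AEEqFun.coeFn_le.1 h

lemma mul_ae {γ : Type*} [TopologicalSpace γ] [CommRing γ] [IsTopologicalRing γ]
    (ξ η : Ω →ₘ[P] γ) : ∀ᵐ ω ∂P, (ξ * η) ω = ξ ω * η ω :=
  AEEqFun.coeFn_mul ξ η

lemma add_ae {γ : Type*} [TopologicalSpace γ] [AddGroup γ] [IsTopologicalAddGroup γ]
    (ξ η : Ω →ₘ[P] γ) : ∀ᵐ ω ∂P, (ξ + η) ω = ξ ω + η ω :=
  AEEqFun.coeFn_add ξ η

lemma sub_ae {γ : Type*} [TopologicalSpace γ] [AddGroup γ] [IsTopologicalAddGroup γ]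
    (ξ η : Ω →ₘ[P] γ) : ∀ᵐ ω ∂P, (ξ - η) ω = ξ ω - η ω :=
  AEEqFun.coeFn_sub ξ η

lemma zero_ae (γ : Type*) [TopologicalSpace γ] [Zero γ] :
    ∀ᵐ ω ∂P, (0 : Ω →ₘ[P] γ) ω = 0 :=
  AEEqFun.coeFn_zero

lemma one_ae (γ : Type*) [TopologicalSpace γ] [One γ] :
    ∀ᵐ ω ∂P, (1 : Ω →ₘ[P] γ) ω = 1 :=
  AEEqFun.coeFn_one

end AELemmas

/-- a countable measurable partition of `Ω`. -/
structure IsMPartition (A : ℕ → Set Ω) : Prop where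
  meas : ∀ n, MeasurableSet (A n)
  disj : Pairwise (Function.onFun Disjoint A)
  cover : (⋃ n, A n) = Set.univ

section Module

variable {E : Type*} [AddCommGroup E] [Module (Ω →ₘ[P] ℂ) E]

variable (P E) in
/-- `E` has the countable concatenation property. -/
def HasCCP : Prop :=
  ∀ (A : ℕ → Set Ω) (hA : IsMPartition A) (x : ℕ → E),
    ∃ x0 : E, ∀ n, indC (P := P) (A n) (hA.meas n) • x0 = indC (P := P) (A n) (hA.meas n) • x n

/-- a subset `S` of `E` has the countable concatenation property. -/
def SetCCP (S : Set E) : Prop :=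
  ∀ (A : ℕ → Set Ω) (hA : IsMPartition A) (x : ℕ → E), (∀ n, x n ∈ S) →
    ∃ x0 ∈ S, ∀ n, indC (P := P) (A n) (hA.meas n) • x0 = indC (P := P) (A n) (hA.meas n) • x n

/-- the countable concatenation hull `H_cc(S)` of a subset `S` of `E`. -/
def Hcc (S : Set E) : Set E :=
  {x | ∃ (A : ℕ → Set Ω) (hA : IsMPartition A) (m : ℕ → E), (∀ n, m n ∈ S) ∧
    ∀ n, indC (P := P) (A n) (hA.meas n) • x = indC (P := P) (A n) (hA.meas n) • m n}

/-- `L⁰`-convexity of a subset of an `L⁰(𝓕,ℂ)`-module. -/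
def L0Convex (S : Set E) : Prop :=
  ∀ x ∈ S, ∀ y ∈ S, ∀ ξ : Ω →ₘ[P] ℝ, 0 ≤ ξ → ξ ≤ 1 →
    ofRealC ξ • x + ofRealC (1 - ξ) • y ∈ S

/-- the random-norm axioms for `nrm : E → L⁰₊`, making `(E, nrm)` an `RN` module over `ℂ`. -/
structure IsRNNorm (nrm : E → (Ω →ₘ[P] ℝ)) : Prop where
  nonneg : ∀ x, 0 ≤ nrm x
  eq_zero_iff : ∀ x, nrm x = 0 ↔ x = 0
  smul_eq : ∀ (ξ : Ω →ₘ[P] ℂ) (x : E), nrm (ξ • x) = L0abs ξ * nrm x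
  add_le : ∀ x y, nrm (x + y) ≤ nrm x + nrm y

/-- the submodule of `P`-a.e. bounded random linear functionals on `(E, nrm)`:
the random conjugate space `E*`. -/
noncomputable def rdual (nrm : E → (Ω →ₘ[P] ℝ)) :
    Submodule (Ω →ₘ[P] ℂ) (E →ₗ[Ω →ₘ[P] ℂ] (Ω →ₘ[P] ℂ)) where
  carrier := {f | ∃ ξ : Ω →ₘ[P] ℝ, 0 ≤ ξ ∧ ∀ x, L0abs (f x) ≤ ξ * nrm x}
  zero_mem' := by
    refine ⟨0, le_refl 0, fun x => ?_⟩
    apply le_of_ae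
    have e0 : ((0 : E →ₗ[Ω →ₘ[P] ℂ] (Ω →ₘ[P] ℂ)) x) = (0 : Ω →ₘ[P] ℂ) := rfl
    filter_upwards [L0abs_ae ((0 : E →ₗ[Ω →ₘ[P] ℂ] (Ω →ₘ[P] ℂ)) x),
      mul_ae (0 : Ω →ₘ[P] ℝ) (nrm x), zero_ae ℝ, zero_ae ℂ] with ω h1 h2 h3 h4
    rw [h1, h2, h3, e0, h4]
    simp
  add_mem' := by
    rintro f g ⟨ξ, hξ0, hξ⟩ ⟨η, hη0, hη⟩
    have hsum : (0 : Ω →ₘ[P] ℝ) ≤ ξ + η := by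
      apply le_of_ae
      filter_upwards [le_ae hξ0, le_ae hη0, add_ae ξ η, zero_ae ℝ] with ω h1 h2 h3 h4
      rw [h3, h4]
      rw [h4] at h1 h2
      linarith
    refine ⟨ξ + η, hsum, fun x => ?_⟩
    apply le_of_ae
    have e1 : ((f + g) x) = f x + g x := rfl
    filter_upwards [L0abs_ae ((f + g) x), add_ae (f x) (g x),
      mul_ae (ξ + η) (nrm x), add_ae ξ η, mul_ae ξ (nrm x), mul_ae η (nrm x),
      le_ae (hξ x), le_ae (hη x), L0abs_ae (f x), L0abs_ae (g x)]
      with ω h1 h2 h3 h4 h5 h6 h7 h8 h9 h10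
    rw [h1, h3, h4, e1, h2]
    rw [h9, h5] at h7
    rw [h10, h6] at h8
    calc ‖f x ω + g x ω‖ ≤ ‖f x ω‖ + ‖g x ω‖ :=
          norm_add_le _ _
      _ ≤ ξ ω * nrm x ω + η ω * nrm x ω := add_le_add h7 h8
      _ = (ξ ω + η ω) * nrm x ω := by ring
  smul_mem' := by
    rintro c f ⟨ξ, hξ0, hξ⟩
    have hpos : (0 : Ω →ₘ[P] ℝ) ≤ L0abs c * ξ := by
      apply le_of_ae
      filter_upwards [mul_ae (L0abs c) ξ, L0abs_ae c, le_ae hξ0, zero_ae ℝ]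
        with ω h1 h2 h3 h4
      rw [h1, h2, h4]
      rw [h4] at h3
      positivity
    refine ⟨L0abs c * ξ, hpos, fun x => ?_⟩
    apply le_of_ae
    have e1 : ((c • f) x) = c * f x := rfl
    filter_upwards [L0abs_ae ((c • f) x), mul_ae c (f x),
      mul_ae (L0abs c * ξ) (nrm x), mul_ae (L0abs c) ξ, L0abs_ae c,
      le_ae (hξ x), L0abs_ae (f x), mul_ae ξ (nrm x)] with ω h1 h2 h3 h4 h5 h6 h7 h8
    rw [h1, h3, h4, h5, e1, h2]
    rw [h7, h8] at h6
    have h0 : (0:ℝ) ≤ ‖c ω‖ := norm_nonneg _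
    calc ‖c ω * f x ω‖ = ‖c ω‖ * ‖f x ω‖ := norm_mul _ _
      _ ≤ ‖c ω‖ * (ξ ω * nrm x ω) := mul_le_mul_of_nonneg_left h6 h0
      _ = ‖c ω‖ * ξ ω * nrm x ω := by ring

/-- the conjugate random norm `‖f‖* = ⋁{|f(y)| : ‖y‖ ≤ 1}` (the lattice supremum, when
it exists). -/
noncomputable def dnorm (nrm : E → (Ω →ₘ[P] ℝ))
    (f : E →ₗ[Ω →ₘ[P] ℂ] (Ω →ₘ[P] ℂ)) : Ω →ₘ[P] ℝ := by
  classical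
  exact if h : ∃ s : Ω →ₘ[P] ℝ, IsLUB {a | ∃ y : E, nrm y ≤ 1 ∧ a = L0abs (f y)} s
    then h.choose else 0

/-- the random natural embedding of `E` into functionals on its random conjugate space. -/
noncomputable def Jmap (nrm : E → (Ω →ₘ[P] ℝ)) (x : E) :
    (↥(rdual nrm)) →ₗ[Ω →ₘ[P] ℂ] (Ω →ₘ[P] ℂ) where
  toFun f := f.1 x
  map_add' f g := rfl
  map_smul' c f := rfl

end Module

section Topologies

/-- a topology built from a directed family of "balls". -/
def ballTop {X ι : Type*} [Nonempty ι] (ball : X → ι → Set X)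
    (dir : ∀ x i j, ∃ k, ball x k ⊆ ball x i ∩ ball x j) : TopologicalSpace X where
  IsOpen B := ∀ x ∈ B, ∃ i, ball x i ⊆ B
  isOpen_univ := fun x _ => ⟨Classical.arbitrary ι, fun _ _ => trivial⟩
  isOpen_inter := fun B C hB hC x hx => by
    obtain ⟨i, hi⟩ := hB x hx.1
    obtain ⟨j, hj⟩ := hC x hx.2
    obtain ⟨k, hk⟩ := dir x i j
    exact ⟨k, fun y hy => ⟨hi (hk hy).1, hj (hk hy).2⟩⟩
  isOpen_sUnion := fun S hS x hx => by
    obtain ⟨B, hB, hxB⟩ := hx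
    obtain ⟨i, hi⟩ := hS B hB x hxB
    exact ⟨i, fun y hy => ⟨B, hB, hi hy⟩⟩

instance L0posNonempty : Nonempty {ε : Ω →ₘ[P] ℝ // L0pos ε} := by
  refine ⟨⟨1, ?_⟩⟩
  filter_upwards [one_ae (P := P) ℝ] with ω h
  rw [h]; exact one_pos

instance : Nonempty {e : ℝ // 0 < e} := ⟨⟨1, one_pos⟩⟩

instance : Nonempty {l : ℝ // 0 < l ∧ l < 1} := ⟨⟨1/2, by norm_num⟩⟩

lemma L0pos_inf {ε δ : Ω →ₘ[P] ℝ} (hε : L0pos ε) (hδ : L0pos δ) : L0pos (ε ⊓ δ) := by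
  filter_upwards [hε, hδ, AEEqFun.coeFn_inf ε δ] with ω h1 h2 h3
  rw [h3]; exact lt_inf_iff.2 ⟨h1, h2⟩

lemma ltAE_inf {a ε δ : Ω →ₘ[P] ℝ} (h : ltAE a (ε ⊓ δ)) : ltAE a ε ∧ ltAE a δ := by
  constructor
  · filter_upwards [h, AEEqFun.coeFn_inf ε δ] with ω h1 h2
    rw [h2] at h1; exact h1.trans_le inf_le_left
  · filter_upwards [h, AEEqFun.coeFn_inf ε δ] with ω h1 h2
    rw [h2] at h1; exact h1.trans_le inf_le_right

variable {E : Type*} [AddCommGroup E] [Module (Ω →ₘ[P] ℂ) E]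

/-- the locally `L⁰`-convex topology `𝓣_c` on an `RN` module `(E, nrm)`. -/
noncomputable def TcTop (nrm : E → (Ω →ₘ[P] ℝ)) : TopologicalSpace E :=
  ballTop (ι := {ε : Ω →ₘ[P] ℝ // L0pos ε})
    (fun x ε => {y | ltAE (nrm (y - x)) ε.1})
    (by
      rintro x ⟨ε, hε⟩ ⟨δ, hδ⟩
      exact ⟨⟨ε ⊓ δ, L0pos_inf hε hδ⟩, fun y hy => ⟨(ltAE_inf hy).1, (ltAE_inf hy).2⟩⟩)

/-- the `(ε,λ)`-topology `𝓣_{ε,λ}` on an `RN` module `(E, nrm)`. -/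
noncomputable def TelTop (nrm : E → (Ω →ₘ[P] ℝ)) : TopologicalSpace E :=
  ballTop (ι := {e : ℝ // 0 < e} × {l : ℝ // 0 < l ∧ l < 1})
    (fun x i => {y | ENNReal.ofReal (1 - i.2.1) < P {ω | nrm (y - x) ω < i.1.1}})
    (by
      rintro x ⟨⟨e₁, he₁⟩, ⟨l₁, hl₁⟩⟩ ⟨⟨e₂, he₂⟩, ⟨l₂, hl₂⟩⟩
      refine ⟨⟨⟨min e₁ e₂, lt_min he₁ he₂⟩,
        ⟨min l₁ l₂, lt_min hl₁.1 hl₂.1, lt_of_le_of_lt (min_le_left _ _) hl₁.2⟩⟩,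
        fun y hy => ⟨?_, ?_⟩⟩ <;> simp only [Set.mem_setOf_eq] at hy ⊢
      · refine lt_of_le_of_lt (ENNReal.ofReal_le_ofReal (by
          have := min_le_left l₁ l₂; linarith)) (hy.trans_le (measure_mono fun ω hω =>
          show nrm (y - x) ω < e₁ from lt_of_lt_of_le hω (min_le_left _ _)))
      · refine lt_of_le_of_lt (ENNReal.ofReal_le_ofReal (by
          have := min_le_right l₁ l₂; linarith)) (hy.trans_le (measure_mono fun ω hω =>
          show nrm (y - x) ω < e₂ from lt_of_lt_of_le hω (min_le_right _ _))))

variable (P) in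
/-- the locally `L⁰`-convex weak star topology `σ_c` on the space of random linear
functionals on a module `M`, induced by the pairing with `M`. -/
noncomputable def sigmaCTop (M : Type*) [AddCommGroup M] [Module (Ω →ₘ[P] ℂ) M] :
    TopologicalSpace (M →ₗ[Ω →ₘ[P] ℂ] (Ω →ₘ[P] ℂ)) :=
  ballTop (ι := Finset M × {ε : Ω →ₘ[P] ℝ // L0pos ε})
    (fun g i => {h | ∀ x ∈ i.1, ltAE (L0abs (h x - g x)) i.2.1})
    (by
      classical
      rintro g ⟨s, ε, hε⟩ ⟨t, δ, hδ⟩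
      refine ⟨⟨s ∪ t, ⟨ε ⊓ δ, L0pos_inf hε hδ⟩⟩, fun h hh => ⟨?_, ?_⟩⟩
      · exact fun x hx => (ltAE_inf (hh x (Finset.mem_union_left t hx))).1
      · exact fun x hx => (ltAE_inf (hh x (Finset.mem_union_right s hx))).2)

variable (P) in
/-- the `(ε,λ)` weak star topology `σ_{(ε,λ)}` on the space of random linear functionals
on a module `M`, induced by the pairing with `M`. -/
noncomputable def sigmaElTop (M : Type*) [AddCommGroup M] [Module (Ω →ₘ[P] ℂ) M] :
    TopologicalSpace (M →ₗ[Ω →ₘ[P] ℂ] (Ω →ₘ[P] ℂ)) :=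
  ballTop (ι := Finset M × {e : ℝ // 0 < e} × {l : ℝ // 0 < l ∧ l < 1})
    (fun g i => {h | ∀ x ∈ i.1,
      ENNReal.ofReal (1 - i.2.2.1) < P {ω | (L0abs (h x - g x)) ω < i.2.1.1}})
    (by
      classical
      rintro g ⟨s, ⟨e₁, he₁⟩, ⟨l₁, hl₁⟩⟩ ⟨t, ⟨e₂, he₂⟩, ⟨l₂, hl₂⟩⟩
      refine ⟨⟨s ∪ t, ⟨min e₁ e₂, lt_min he₁ he₂⟩,
        ⟨min l₁ l₂, lt_min hl₁.1 hl₂.1, lt_of_le_of_lt (min_le_left _ _) hl₁.2⟩⟩,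
        fun h hh => ⟨fun x hx => ?_, fun x hx => ?_⟩⟩
      · refine lt_of_le_of_lt (ENNReal.ofReal_le_ofReal (by
          have := min_le_left l₁ l₂; linarith))
          ((hh x (Finset.mem_union_left t hx)).trans_le (measure_mono fun ω hω =>
            show (L0abs (h x - g x)) ω < e₁ from lt_of_lt_of_le hω (min_le_left _ _)))
      · refine lt_of_le_of_lt (ENNReal.ofReal_le_ofReal (by
          have := min_le_right l₁ l₂; linarith))
          ((hh x (Finset.mem_union_right s hx)).trans_le (measure_mono fun ω hω =>
            show (L0abs (h x - g x)) ω < e₂ from lt_of_lt_of_le hω (min_le_right _ _))))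

end Topologies

end RNM


namespace HellyAux
open MeasureTheory RNM

noncomputable abbrev P0 : Measure ℝ := MeasureTheory.volume.restrict (Set.Icc (0 : ℝ) 1)

lemma two_pow_pos (n : ℕ) : (0:ℝ) < (2:ℝ) ^ n := by positivity

lemma inv_pow_anti {m n : ℕ} (h : m ≤ n) : ((2:ℝ) ^ n)⁻¹ ≤ ((2:ℝ) ^ m)⁻¹ := by
  gcongr <;> norm_num

lemma inv_pow_le_one (n : ℕ) : ((2:ℝ) ^ n)⁻¹ ≤ 1 := by
  simpa using inv_pow_anti (Nat.zero_le n)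

lemma inv_pow_succ_lt (n : ℕ) : ((2:ℝ) ^ (n+1))⁻¹ < ((2:ℝ) ^ n)⁻¹ := by
  apply inv_strictAnti₀ (two_pow_pos n)
  have := two_pow_pos n
  rw [pow_succ]; linarith

lemma exists_interval {ω : ℝ} (h0 : 0 < ω) (h1 : ω ≤ 1) :
    ∃ n : ℕ, ((2:ℝ) ^ (n+1))⁻¹ < ω ∧ ω ≤ ((2:ℝ) ^ n)⁻¹ := by
  classical
  have hex : ∃ n : ℕ, ((2:ℝ) ^ (n+1))⁻¹ < ω := by
    obtain ⟨n, hn⟩ := exists_pow_lt_of_lt_one h0 (by norm_num : (2:ℝ)⁻¹ < 1)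
    refine ⟨n, lt_of_le_of_lt ?_ hn⟩
    rw [← inv_pow]
    exact pow_le_pow_of_le_one (by norm_num) (by norm_num) (Nat.le_succ n)
  refine ⟨Nat.find hex, Nat.find_spec hex, ?_⟩
  rcases Nat.eq_zero_or_pos (Nat.find hex) with h | h
  · rw [h]; simpa using h1
  · obtain ⟨m, hm⟩ := Nat.exists_eq_succ_of_ne_zero h.ne'
    have hmin := Nat.find_min hex (by omega : m < Nat.find hex)
    rw [hm]
    exact not_lt.mp hmin

lemma P0_Ioo {a b : ℝ} (ha : 0 ≤ a) (hb : b ≤ 1) :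
    P0 (Set.Ioo a b) = ENNReal.ofReal (b - a) := by
  rw [P0, Measure.restrict_apply measurableSet_Ioo,
    Set.inter_eq_self_of_subset_left (Set.Ioo_subset_Icc_self.trans (Set.Icc_subset_Icc ha hb)),
    Real.volume_Ioo]

lemma P0_ae_Ioc : ∀ᵐ ω ∂P0, ω ∈ Set.Ioc (0:ℝ) 1 := by
  rw [ae_iff, P0]
  have hset : {a : ℝ | ¬ a ∈ Set.Ioc (0:ℝ) 1} = (Set.Ioc (0:ℝ) 1)ᶜ := rfl
  rw [hset, Measure.restrict_apply measurableSet_Ioc.compl]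
  refine measure_mono_null (fun ω hω => ?_) (Real.volume_singleton (a := 0))
  obtain ⟨h1, h2⟩ := hω
  simp only [Set.mem_compl_iff, Set.mem_Ioc, not_and, not_le] at h1
  simp only [Set.mem_Icc] at h2
  have hω0 : ω = 0 := le_antisymm (not_lt.mp fun hpos => absurd (h1 hpos) (not_lt.mpr h2.2)) h2.1
  exact hω0

lemma indC_ae (A : Set ℝ) (hA : MeasurableSet A) :
    ∀ᵐ ω ∂P0, (indC (P := P0) A hA) ω = A.indicator (fun _ => (1:ℂ)) ω :=
  AEEqFun.coeFn_mk _ _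

lemma mem_span_support {x : ℝ →ₘ[P0] ℂ}
    (hx : x ∈ Submodule.span (ℝ →ₘ[P0] ℂ)
      {g | ∃ n : ℕ, g = indC (P := P0)
        (Set.Icc (((2 : ℝ) ^ (n + 1))⁻¹) (((2 : ℝ) ^ n)⁻¹)) measurableSet_Icc}) :
    ∃ N : ℕ, ∀ᵐ ω ∂P0, ω ∈ Set.Ioo 0 (((2:ℝ) ^ N)⁻¹) → x ω = 0 := by
  induction hx using Submodule.span_induction with
  | mem g hg =>
      obtain ⟨n, rfl⟩ := hg
      refine ⟨n + 1, ?_⟩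
      filter_upwards [indC_ae _ measurableSet_Icc] with ω h hω
      rw [h]
      exact Set.indicator_of_notMem (fun hmem => absurd hmem.1 (not_le.mpr hω.2)) _
  | zero => exact ⟨0, by filter_upwards [zero_ae ℂ] with ω h _; exact h⟩
  | add y z hy hz ihy ihz =>
      obtain ⟨N1, h1⟩ := ihy
      obtain ⟨N2, h2⟩ := ihz
      refine ⟨max N1 N2, ?_⟩
      filter_upwards [h1, h2, add_ae y z] with ω hy' hz' hadd hω
      have hsub : ∀ M, M ≤ max N1 N2 → ω ∈ Set.Ioo 0 (((2:ℝ) ^ M)⁻¹) := fun M hM =>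
        ⟨hω.1, lt_of_lt_of_le hω.2 (inv_pow_anti hM)⟩
      rw [hadd, hy' (hsub N1 (le_max_left _ _)), hz' (hsub N2 (le_max_right _ _)), add_zero]
  | smul c y hy ihy =>
      obtain ⟨N, h⟩ := ihy
      refine ⟨N, ?_⟩
      have hcy : c • y = c * y := smul_eq_mul ..
      filter_upwards [h, mul_ae c y] with ω h1 h2 hω
      rw [hcy, h2, h1 hω, mul_zero]

end HellyAux


open MeasureTheory RNM in
/-- The Helly counterexample (Remark 3.3): over the base `([0,1], Lebesgue)`, the
submodule `E` of `L⁰(𝓕,ℂ)` generated by the indicators of `[2^{-(n+1)}, 2^{-n}]`, with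
`‖η‖ = |η|`, is an `RN` module lacking the countable concatenation property; the
identity functional `f`, `ξ = β = 1` satisfy `|λξ| ≤ β ‖λ f‖*` for all `λ`, yet no
`x ∈ E` satisfies `f(x) = ξ`. -/
theorem helly_counterexample :
    ∀ P : Measure ℝ, P = MeasureTheory.volume.restrict (Set.Icc (0 : ℝ) 1) →
    ∀ E : Submodule (ℝ →ₘ[P] ℂ) (ℝ →ₘ[P] ℂ),
      E = Submodule.span (ℝ →ₘ[P] ℂ)
        {g | ∃ n : ℕ, g = indC (P := P)
          (Set.Icc (((2 : ℝ) ^ (n + 1))⁻¹) (((2 : ℝ) ^ n)⁻¹)) measurableSet_Icc} →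
      IsRNNorm (fun η : ↥E => L0abs η.1) ∧
      ¬ SetCCP (P := P) (E : Set (ℝ →ₘ[P] ℂ)) ∧
      E.subtype ∈ rdual (fun η : ↥E => L0abs η.1) ∧
      (∀ lam : ℝ →ₘ[P] ℂ,
        L0abs (lam * 1) ≤ 1 * dnorm (fun η : ↥E => L0abs η.1) (lam • E.subtype)) ∧
      ¬ ∃ x : ↥E, E.subtype x = 1 := by
  intro P hP E hE
  subst hP
  refine ⟨?_, ?_, ?_, ?_, ?_⟩
  · -- IsRNNorm
    constructor
    · intro x
      apply le_of_ae
      filter_upwards [zero_ae ℝ, L0abs_ae x.1] with ω h0 h1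
      rw [h0, h1]
      positivity
    · intro x
      constructor
      · intro h
        have h1 := L0abs_ae x.1
        rw [h] at h1
        refine Subtype.ext ?_
        apply AEEqFun.ext
        filter_upwards [h1, zero_ae ℝ, zero_ae ℂ] with ω e1 e2 e3
        rw [e2] at e1
        rw [(ZeroMemClass.coe_zero E : ((0 : ↥E) : ℝ →ₘ[HellyAux.P0] ℂ) = 0), e3]
        exact norm_eq_zero.mp e1.symm
      · rintro rfl
        apply AEEqFun.ext
        have hc : ((0 : ↥E) : ℝ →ₘ[HellyAux.P0] ℂ) = 0 := ZeroMemClass.coe_zero E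
        rw [hc]
        filter_upwards [L0abs_ae (0 : ℝ →ₘ[HellyAux.P0] ℂ), zero_ae ℂ, zero_ae ℝ]
          with ω e1 e2 e3
        rw [e1, e2, e3]
        simp
    · intro ξ x
      have hc : ((ξ • x : ↥E) : ℝ →ₘ[HellyAux.P0] ℂ) = ξ * x.1 := by
        rw [Submodule.coe_smul, smul_eq_mul]
      apply AEEqFun.ext
      rw [hc]
      filter_upwards [L0abs_ae (ξ * x.1), mul_ae ξ x.1,
        mul_ae (L0abs ξ) (L0abs x.1), L0abs_ae ξ, L0abs_ae x.1] with ω e1 e2 e3 e4 e5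
      rw [e1, e2, e3, e4, e5, norm_mul]
    · intro x y
      have hc : ((x + y : ↥E) : ℝ →ₘ[HellyAux.P0] ℂ) = x.1 + y.1 := rfl
      apply le_of_ae
      rw [hc]
      filter_upwards [L0abs_ae (x.1 + y.1), add_ae x.1 y.1,
        add_ae (L0abs x.1) (L0abs y.1), L0abs_ae x.1, L0abs_ae y.1] with ω e1 e2 e3 e4 e5
      rw [e1, e2, e3, e4, e5]
      exact norm_add_le _ _
  · -- not SetCCP
    intro hccp
    set A : ℕ → Set ℝ := fun n => match n with
      | 0 => (Set.Ioc (0:ℝ) 1)ᶜ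
      | Nat.succ m => Set.Ioc (((2:ℝ) ^ (m+1))⁻¹) (((2:ℝ) ^ m)⁻¹) with hA
    have hsucc : ∀ m : ℕ, A (m+1) = Set.Ioc (((2:ℝ) ^ (m+1))⁻¹) (((2:ℝ) ^ m)⁻¹) := fun m => rfl
    have h0 : A 0 = (Set.Ioc (0:ℝ) 1)ᶜ := rfl
    have hmeas : ∀ n, MeasurableSet (A n) := by
      intro n
      cases n with
      | zero => rw [h0]; exact measurableSet_Ioc.compl
      | succ m => rw [hsucc]; exact measurableSet_Ioc
    have hsubIoc : ∀ m : ℕ, A (m+1) ⊆ Set.Ioc (0:ℝ) 1 := by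
      intro m ω hω
      rw [hsucc] at hω
      exact ⟨lt_trans (by positivity) hω.1, hω.2.trans (HellyAux.inv_pow_le_one m)⟩
    have key : ∀ m n : ℕ, m < n → Disjoint (A m) (A n) := by
      intro m n hmn
      rw [Set.disjoint_left]
      intro ω hωm hωn
      cases m with
      | zero =>
        obtain ⟨k, rfl⟩ := Nat.exists_eq_succ_of_ne_zero hmn.ne'
        rw [h0] at hωm
        exact hωm (hsubIoc k hωn)
      | succ k =>
        obtain ⟨l, rfl⟩ : ∃ l, n = l + 1 := ⟨n - 1, by omega⟩
        rw [hsucc] at hωm hωn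
        have hkl : k + 1 ≤ l := by omega
        exact absurd (hωn.2.trans (HellyAux.inv_pow_anti hkl)) (not_le.mpr hωm.1)
    have hdisj : Pairwise (Function.onFun Disjoint A) := by
      intro m n hmn
      rcases lt_or_gt_of_ne hmn with h | h
      · exact key m n h
      · exact (key n m h).symm
    have hcover : (⋃ n, A n) = Set.univ := by
      ext ω
      simp only [Set.mem_iUnion, Set.mem_univ, iff_true]
      by_cases h : ω ∈ Set.Ioc (0:ℝ) 1
      · obtain ⟨n, h1, h2⟩ := HellyAux.exists_interval h.1 h.2
        exact ⟨n+1, by rw [hsucc]; exact ⟨h1, h2⟩⟩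
      · exact ⟨0, by rw [h0]; exact h⟩
    have hpart : IsMPartition A := ⟨hmeas, hdisj, hcover⟩
    set x : ℕ → (ℝ →ₘ[HellyAux.P0] ℂ) := fun n => match n with
      | 0 => 0
      | Nat.succ m => indC (P := HellyAux.P0)
          (Set.Icc (((2:ℝ) ^ (m+1))⁻¹) (((2:ℝ) ^ m)⁻¹)) measurableSet_Icc with hxdef
    have hxsucc : ∀ m : ℕ, x (m+1) = indC (P := HellyAux.P0)
        (Set.Icc (((2:ℝ) ^ (m+1))⁻¹) (((2:ℝ) ^ m)⁻¹)) measurableSet_Icc := fun m => rfl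
    have hxmem : ∀ n, x n ∈ (E : Set (ℝ →ₘ[HellyAux.P0] ℂ)) := by
      intro n
      cases n with
      | zero => exact SetLike.mem_coe.mpr E.zero_mem
      | succ m =>
        rw [hxsucc]
        refine SetLike.mem_coe.mpr ?_
        rw [hE]
        exact Submodule.subset_span ⟨m, rfl⟩
    obtain ⟨x0, hx0, hcat⟩ := hccp A hpart x hxmem
    have hx0span : x0 ∈ Submodule.span (ℝ →ₘ[HellyAux.P0] ℂ)
        {g | ∃ n : ℕ, g = indC (P := HellyAux.P0)
          (Set.Icc (((2 : ℝ) ^ (n + 1))⁻¹) (((2 : ℝ) ^ n)⁻¹)) measurableSet_Icc} := by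
      rw [← hE]
      exact SetLike.mem_coe.mp hx0
    obtain ⟨N, hN⟩ := HellyAux.mem_span_support hx0span
    have hc := hcat (N+1)
    rw [smul_eq_mul, smul_eq_mul] at hc
    have hc' : ∀ᵐ ω ∂HellyAux.P0,
        (indC (P := HellyAux.P0) (A (N+1)) (hpart.meas (N+1)) * x0) ω
          = (indC (P := HellyAux.P0) (A (N+1)) (hpart.meas (N+1)) * x (N+1)) ω := by
      rw [hc]
      exact Filter.Eventually.of_forall fun ω => rfl
    have hzero : HellyAux.P0 (Set.Ioo (((2:ℝ) ^ (N+1))⁻¹) (((2:ℝ) ^ N)⁻¹)) = 0 := by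
      refine measure_eq_zero_iff_ae_notMem.mpr ?_
      filter_upwards [hc', hN,
        mul_ae (indC (P := HellyAux.P0) (A (N+1)) (hpart.meas (N+1))) x0,
        mul_ae (indC (P := HellyAux.P0) (A (N+1)) (hpart.meas (N+1))) (x (N+1)),
        HellyAux.indC_ae (A (N+1)) (hpart.meas (N+1)),
        HellyAux.indC_ae (Set.Icc (((2:ℝ) ^ (N+1))⁻¹) (((2:ℝ) ^ N)⁻¹)) measurableSet_Icc]
        with ω e1 e2 e3 e4 e5 e6 hmem
      have hA1 : ω ∈ A (N+1) := by
        rw [hsucc]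
        exact ⟨hmem.1, hmem.2.le⟩
      have hI : ω ∈ Set.Icc (((2:ℝ) ^ (N+1))⁻¹) (((2:ℝ) ^ N)⁻¹) := ⟨hmem.1.le, hmem.2.le⟩
      rw [e3, e4, e5, Set.indicator_of_mem hA1] at e1
      have e6' : (x (N+1)) ω = (Set.Icc (((2:ℝ) ^ (N+1))⁻¹)
          (((2:ℝ) ^ N)⁻¹)).indicator (fun _ => (1:ℂ)) ω := by
        rw [hxsucc]; exact e6
      rw [e6', Set.indicator_of_mem hI, one_mul, one_mul] at e1
      have hx0zero : x0 ω = 0 := e2 ⟨lt_trans (by positivity) hmem.1, hmem.2⟩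
      rw [hx0zero] at e1
      exact one_ne_zero e1.symm
    rw [HellyAux.P0_Ioo (by positivity) (HellyAux.inv_pow_le_one N)] at hzero
    simp only [ENNReal.ofReal_eq_zero, sub_nonpos] at hzero
    exact absurd hzero (not_le.mpr (HellyAux.inv_pow_succ_lt N))
  · -- subtype in rdual
    refine ⟨1, ?_, fun x => ?_⟩
    · apply le_of_ae
      filter_upwards [zero_ae ℝ, one_ae ℝ] with ω h0 h1
      rw [h0, h1]
      norm_num
    · apply le_of_ae
      have hc : E.subtype x = x.1 := rfl
      filter_upwards [L0abs_ae (E.subtype x), mul_ae (1 : ℝ →ₘ[HellyAux.P0] ℝ) (L0abs x.1),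
        one_ae ℝ, L0abs_ae x.1] with ω e1 e2 e3 e4
      rw [e1, e2, e3, e4, one_mul, hc]
  · -- dnorm inequality
    intro lam
    set S : Set (ℝ →ₘ[HellyAux.P0] ℝ) :=
      {a | ∃ y : ↥E, L0abs y.1 ≤ 1 ∧ a = L0abs ((lam • E.subtype) y)} with hS
    have happ : ∀ y : ↥E, (lam • E.subtype) y = lam * y.1 := fun y => by
      rw [LinearMap.smul_apply, Submodule.subtype_apply, smul_eq_mul]
    have hub : L0abs lam ∈ upperBounds S := by
      rintro a ⟨y, hy, rfl⟩
      rw [happ y]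
      apply le_of_ae
      filter_upwards [L0abs_ae (lam * y.1), mul_ae lam y.1, le_ae hy,
        L0abs_ae y.1, one_ae ℝ, L0abs_ae lam] with ω e1 e2 e3 e4 e5 e6
      rw [e1, e2, e6, norm_mul]
      rw [e4, e5] at e3
      exact mul_le_of_le_one_right (norm_nonneg _) e3
    have hmemE : ∀ n : ℕ, (indC (P := HellyAux.P0)
        (Set.Icc (((2 : ℝ) ^ (n + 1))⁻¹) (((2 : ℝ) ^ n)⁻¹)) measurableSet_Icc) ∈ E := by
      intro n
      rw [hE]
      exact Submodule.subset_span ⟨n, rfl⟩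
    have hnorm1 : ∀ n : ℕ, L0abs ((⟨_, hmemE n⟩ : ↥E) : ℝ →ₘ[HellyAux.P0] ℂ) ≤ 1 := by
      intro n
      apply le_of_ae
      filter_upwards [L0abs_ae ((⟨_, hmemE n⟩ : ↥E) : ℝ →ₘ[HellyAux.P0] ℂ), one_ae ℝ,
        HellyAux.indC_ae _ measurableSet_Icc] with ω e1 e2 e3
      rw [e1, e2]
      show ‖(indC (P := HellyAux.P0) _ measurableSet_Icc) ω‖ ≤ 1
      rw [e3]
      by_cases hmem : ω ∈ Set.Icc (((2 : ℝ) ^ (n + 1))⁻¹) (((2 : ℝ) ^ n)⁻¹)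
      · rw [Set.indicator_of_mem hmem]; simp
      · rw [Set.indicator_of_notMem hmem]; simp
    have hlub : IsLUB S (L0abs lam) := by
      refine ⟨hub, fun u hu => ?_⟩
      have hn : ∀ n : ℕ, L0abs (lam * (indC (P := HellyAux.P0)
          (Set.Icc (((2 : ℝ) ^ (n + 1))⁻¹) (((2 : ℝ) ^ n)⁻¹)) measurableSet_Icc)) ≤ u := by
        intro n
        have hmemS : L0abs ((lam • E.subtype) (⟨_, hmemE n⟩ : ↥E)) ∈ S := by
          rw [hS]
          exact Set.mem_setOf_eq ▸ ⟨⟨_, hmemE n⟩, hnorm1 n, rfl⟩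
        have := hu hmemS
        rwa [happ] at this
      have h1 : ∀ᵐ ω ∂HellyAux.P0, ∀ n : ℕ, (L0abs (lam * (indC (P := HellyAux.P0)
          (Set.Icc (((2 : ℝ) ^ (n + 1))⁻¹) (((2 : ℝ) ^ n)⁻¹)) measurableSet_Icc))) ω ≤ u ω :=
        MeasureTheory.ae_all_iff.mpr fun n => le_ae (hn n)
      have h2 : ∀ᵐ ω ∂HellyAux.P0, ∀ n : ℕ, (L0abs (lam * (indC (P := HellyAux.P0)
          (Set.Icc (((2 : ℝ) ^ (n + 1))⁻¹) (((2 : ℝ) ^ n)⁻¹)) measurableSet_Icc))) ω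
          = ‖(lam * (indC (P := HellyAux.P0)
          (Set.Icc (((2 : ℝ) ^ (n + 1))⁻¹) (((2 : ℝ) ^ n)⁻¹)) measurableSet_Icc)) ω‖ :=
        MeasureTheory.ae_all_iff.mpr fun n => L0abs_ae _
      have h3 : ∀ᵐ ω ∂HellyAux.P0, ∀ n : ℕ, ((lam * (indC (P := HellyAux.P0)
          (Set.Icc (((2 : ℝ) ^ (n + 1))⁻¹) (((2 : ℝ) ^ n)⁻¹)) measurableSet_Icc))) ω
          = lam ω * (indC (P := HellyAux.P0)
          (Set.Icc (((2 : ℝ) ^ (n + 1))⁻¹) (((2 : ℝ) ^ n)⁻¹)) measurableSet_Icc) ω :=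
        MeasureTheory.ae_all_iff.mpr fun n => mul_ae _ _
      have h4 : ∀ᵐ ω ∂HellyAux.P0, ∀ n : ℕ, (indC (P := HellyAux.P0)
          (Set.Icc (((2 : ℝ) ^ (n + 1))⁻¹) (((2 : ℝ) ^ n)⁻¹)) measurableSet_Icc) ω
          = (Set.Icc (((2 : ℝ) ^ (n + 1))⁻¹) (((2 : ℝ) ^ n)⁻¹)).indicator (fun _ => (1:ℂ)) ω :=
        MeasureTheory.ae_all_iff.mpr fun n => HellyAux.indC_ae _ _
      apply le_of_ae
      filter_upwards [h1, h2, h3, h4, HellyAux.P0_ae_Ioc, L0abs_ae lam]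
        with ω e1 e2 e3 e4 e5 e6
      obtain ⟨n, hn1, hn2⟩ := HellyAux.exists_interval e5.1 e5.2
      have := e1 n
      rw [e2 n, e3 n, e4 n, Set.indicator_of_mem (Set.mem_Icc.mpr ⟨le_of_lt hn1, hn2⟩), mul_one] at this
      rw [e6]
      exact this
    have hex : ∃ s, IsLUB S s := ⟨_, hlub⟩
    simp only [dnorm]
    rw [dif_pos hex]
    have heq := hlub.unique hex.choose_spec
    rw [← heq]
    apply le_of_ae
    filter_upwards [L0abs_ae (lam * 1), mul_ae lam 1, one_ae ℂ,
      mul_ae (1 : ℝ →ₘ[HellyAux.P0] ℝ) (L0abs lam), one_ae ℝ, L0abs_ae lam]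
      with ω e1 e2 e3 e4 e5 e6
    rw [e1, e2, e3, e4, e5, e6, mul_one, one_mul]
  · -- no x with f x = 1
    rintro ⟨x, hx⟩
    have hx2 : (x : ℝ →ₘ[HellyAux.P0] ℂ) ∈ Submodule.span (ℝ →ₘ[HellyAux.P0] ℂ)
        {g | ∃ n : ℕ, g = indC (P := HellyAux.P0)
          (Set.Icc (((2 : ℝ) ^ (n + 1))⁻¹) (((2 : ℝ) ^ n)⁻¹)) measurableSet_Icc} := by
      rw [← hE]; exact x.2
    obtain ⟨N, hN⟩ := HellyAux.mem_span_support hx2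
    have hx1 : (x : ℝ →ₘ[HellyAux.P0] ℂ) = 1 := hx
    have hzero : HellyAux.P0 (Set.Ioo 0 (((2:ℝ) ^ N)⁻¹)) = 0 := by
      refine measure_eq_zero_iff_ae_notMem.mpr ?_
      rw [hx1] at hN
      filter_upwards [hN, one_ae ℂ] with ω h1 h2 hmem
      exact one_ne_zero (h2 ▸ h1 hmem)
    rw [HellyAux.P0_Ioo le_rfl (HellyAux.inv_pow_le_one N)] at hzero
    simp only [sub_zero, ENNReal.ofReal_eq_zero, not_lt] at hzero
    exact absurd hzero (not_le.mpr (by positivity))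
end

section
/- In the setting of the Helly counterexample: let E be the L⁰([0,1],ℂ)-submodule of L⁰ consisting of all finite sums Σᵢ ξᵢ Ĩ_{[2^{-(nᵢ+1)}, 2^{-nᵢ}]} with ξᵢ ∈ L⁰ and nᵢ ∈ ℕ. Then E does not have the countable concatenation property; in particular the constant function 1 does not belong to E although Ĩ_{Aₙ}·1 ∈ Ĩ_{Aₙ}E for the countable partition Aₙ = [2^{-(n+1)}, 2^{-n}] (together with the null set {0,1}-adjustment) of [0,1]. -/
open MeasureTheory

open MeasureTheory RNM in
private lemma helly_indC_coe {P : Measure ℝ} (A : Set ℝ) (hA : MeasurableSet A) :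
    (indC (P := P) A hA : ℝ →ₘ[P] ℂ) =ᵐ[P] A.indicator (fun _ => (1 : ℂ)) :=
  AEEqFun.coeFn_mk _ _

private lemma helly_inv_le {N M : ℕ} (h : N ≤ M) : ((2:ℝ)^M)⁻¹ ≤ ((2:ℝ)^N)⁻¹ := by
  apply inv_anti₀ (by positivity)
  exact pow_le_pow_right₀ one_le_two h

private lemma helly_inv_le_one (N : ℕ) : ((2:ℝ)^N)⁻¹ ≤ 1 := by
  simpa using helly_inv_le (Nat.zero_le N)

private lemma helly_find {ω : ℝ} (hω : ω ∈ Set.Ioc (0:ℝ) 1) :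
    ∃ n : ℕ, ω ∈ Set.Ioc (((2:ℝ)^(n+1))⁻¹) (((2:ℝ)^n)⁻¹) := by
  have hex : ∃ n : ℕ, ((2:ℝ)^(n+1))⁻¹ < ω := by
    obtain ⟨k, hk⟩ := exists_pow_lt_of_lt_one hω.1 (by norm_num : (2:ℝ)⁻¹ < 1)
    refine ⟨k, ?_⟩
    calc ((2:ℝ)^(k+1))⁻¹ = ((2:ℝ)⁻¹)^(k+1) := (inv_pow _ _).symm
      _ ≤ ((2:ℝ)⁻¹)^k := pow_le_pow_of_le_one (by norm_num) (by norm_num) (Nat.le_succ k)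
      _ < ω := hk
  refine ⟨Nat.find hex, Nat.find_spec hex, ?_⟩
  rcases Nat.eq_zero_or_pos (Nat.find hex) with h0 | hpos
  · rw [h0]; simpa using hω.2
  · obtain ⟨m, hm⟩ := Nat.exists_eq_add_of_lt hpos
    have := Nat.find_min hex (m := m) (by omega)
    rw [hm]
    push_neg at this
    simpa [Nat.zero_add] using this

open MeasureTheory RNM in
private lemma helly_vanish
    (x : ℝ →ₘ[volume.restrict (Set.Icc (0:ℝ) 1)] ℂ)
    (hx : x ∈ Submodule.span (ℝ →ₘ[volume.restrict (Set.Icc (0:ℝ) 1)] ℂ)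
      {g | ∃ n : ℕ, g = indC (P := volume.restrict (Set.Icc (0:ℝ) 1))
        (Set.Icc (((2 : ℝ) ^ (n + 1))⁻¹) (((2 : ℝ) ^ n)⁻¹)) measurableSet_Icc}) :
    ∃ N : ℕ, ∀ᵐ ω ∂(volume.restrict (Set.Icc (0:ℝ) 1)),
      ω ∈ Set.Ioo (0:ℝ) ((2:ℝ)^(N+1))⁻¹ → x ω = 0 := by
  induction hx using Submodule.span_induction with
  | mem g hg =>
      obtain ⟨n, rfl⟩ := hg
      refine ⟨n, ?_⟩
      filter_upwards [helly_indC_coe _ measurableSet_Icc] with ω h hω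
      rw [h]
      apply Set.indicator_of_notMem
      intro hmem
      exact absurd hmem.1 (not_le.mpr hω.2)
  | zero =>
      exact ⟨0, by filter_upwards [zero_ae ℂ] with ω h _ using h⟩
  | add y z hy hz ihy ihz =>
      obtain ⟨N, hN⟩ := ihy
      obtain ⟨M, hM⟩ := ihz
      refine ⟨max N M, ?_⟩
      filter_upwards [hN, hM, add_ae y z] with ω h1 h2 h3 hω
      have hωN : ω ∈ Set.Ioo (0:ℝ) ((2:ℝ)^(N+1))⁻¹ :=
        ⟨hω.1, lt_of_lt_of_le hω.2 (helly_inv_le (by omega))⟩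
      have hωM : ω ∈ Set.Ioo (0:ℝ) ((2:ℝ)^(M+1))⁻¹ :=
        ⟨hω.1, lt_of_lt_of_le hω.2 (helly_inv_le (by omega))⟩
      rw [h3, h1 hωN, h2 hωM, add_zero]
  | smul ξ y hy ih =>
      obtain ⟨N, hN⟩ := ih
      refine ⟨N, ?_⟩
      have : ξ • y = ξ * y := rfl
      rw [this]
      filter_upwards [hN, mul_ae ξ y] with ω h1 h2 hω
      rw [h2, h1 hω, mul_zero]

open MeasureTheory RNM in
/-- In the Helly counterexample the submodule `E` generated by the indicators of the
dyadic intervals `[2^{-(n+1)}, 2^{-n}]` does not have the countable concatenation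
property; in particular `1 ∉ E` although `Ĩ_{Aₙ}·1 ∈ Ĩ_{Aₙ}E` for each stratum
`Aₙ = [2^{-(n+1)}, 2^{-n}]`. -/
theorem counterexample_no_ccp :
    ∀ P : Measure ℝ, P = MeasureTheory.volume.restrict (Set.Icc (0 : ℝ) 1) →
    ∀ E : Submodule (ℝ →ₘ[P] ℂ) (ℝ →ₘ[P] ℂ),
      E = Submodule.span (ℝ →ₘ[P] ℂ)
        {g | ∃ n : ℕ, g = indC (P := P)
          (Set.Icc (((2 : ℝ) ^ (n + 1))⁻¹) (((2 : ℝ) ^ n)⁻¹)) measurableSet_Icc} →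
      ¬ SetCCP (P := P) (E : Set (ℝ →ₘ[P] ℂ)) ∧
      (1 : ℝ →ₘ[P] ℂ) ∉ E ∧
      ∀ n : ℕ, ∃ e ∈ E,
        indC (P := P) (Set.Icc (((2 : ℝ) ^ (n + 1))⁻¹) (((2 : ℝ) ^ n)⁻¹))
            measurableSet_Icc * (1 : ℝ →ₘ[P] ℂ) =
          indC (P := P) (Set.Icc (((2 : ℝ) ^ (n + 1))⁻¹) (((2 : ℝ) ^ n)⁻¹))
            measurableSet_Icc * e := by
  intro P hP E hE
  subst hP
  subst hE
  set μ := MeasureTheory.volume.restrict (Set.Icc (0 : ℝ) 1) with hμ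
  set S : Set (ℝ →ₘ[μ] ℂ) :=
    {g | ∃ n : ℕ, g = indC (P := μ)
      (Set.Icc (((2 : ℝ) ^ (n + 1))⁻¹) (((2 : ℝ) ^ n)⁻¹)) measurableSet_Icc} with hS
  -- Part 2 : 1 ∉ span S
  have hone : (1 : ℝ →ₘ[μ] ℂ) ∉ Submodule.span (ℝ →ₘ[μ] ℂ) S := by
    intro h1
    obtain ⟨N, hN⟩ := helly_vanish 1 h1
    have hsub : Set.Ioo (0:ℝ) ((2:ℝ)^(N+1))⁻¹ ⊆ Set.Icc (0:ℝ) 1 :=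
      fun ω hω => ⟨hω.1.le, hω.2.le.trans (helly_inv_le_one _)⟩
    have hpos : 0 < μ (Set.Ioo (0:ℝ) ((2:ℝ)^(N+1))⁻¹) := by
      rw [hμ, Measure.restrict_apply measurableSet_Ioo,
        Set.inter_eq_left.mpr hsub, Real.volume_Ioo]
      rw [sub_zero]
      exact ENNReal.ofReal_pos.mpr (by positivity)
    have hnull : μ (Set.Ioo (0:ℝ) ((2:ℝ)^(N+1))⁻¹) = 0 := by
      have hae : ∀ᵐ ω ∂μ, ω ∉ Set.Ioo (0:ℝ) ((2:ℝ)^(N+1))⁻¹ := by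
        filter_upwards [hN, one_ae ℂ] with ω h h1 hmem
        exact one_ne_zero (h1 ▸ h hmem)
      have := ae_iff.mp hae
      simpa only [not_not, Set.setOf_mem_eq] using this
    exact hpos.ne' hnull
  refine ⟨?_, hone, ?_⟩
  · -- Part 1 : no countable concatenation property
    intro hccp
    -- the countable measurable partition
    set A : ℕ → Set ℝ := fun n => match n with
      | 0 => (Set.Ioc (0:ℝ) 1)ᶜ
      | (m+1) => Set.Ioc (((2:ℝ)^(m+1))⁻¹) (((2:ℝ)^m)⁻¹) with hA
    have hAsub : ∀ m : ℕ, A (m+1) ⊆ Set.Ioc (0:ℝ) 1 := by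
      intro m ω hω
      exact ⟨lt_trans (by positivity) hω.1, hω.2.trans (helly_inv_le_one m)⟩
    have hApart : IsMPartition A := by
      constructor
      · intro n
        match n with
        | 0 => exact measurableSet_Ioc.compl
        | (m+1) => exact measurableSet_Ioc
      · intro m n hmn
        match m, n with
        | 0, 0 => exact absurd rfl hmn
        | 0, (k+1) =>
            exact Disjoint.mono_right (hAsub k) disjoint_compl_left
        | (k+1), 0 =>
            exact (Disjoint.mono_right (hAsub k) disjoint_compl_left).symm
        | (j+1), (k+1) =>
            have hjk : j ≠ k := by omega
            show Disjoint (Set.Ioc (((2:ℝ)^(j+1))⁻¹) (((2:ℝ)^j)⁻¹))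
              (Set.Ioc (((2:ℝ)^(k+1))⁻¹) (((2:ℝ)^k)⁻¹))
            rw [Set.Ioc_disjoint_Ioc]
            rcases lt_or_gt_of_ne hjk with h | h
            · exact le_trans (min_le_right _ _)
                (le_trans (helly_inv_le (by omega)) (le_max_left _ _))
            · exact le_trans (min_le_left _ _)
                (le_trans (helly_inv_le (by omega)) (le_max_right _ _))
      · ext ω
        simp only [Set.mem_iUnion, Set.mem_univ, iff_true]
        by_cases hω : ω ∈ Set.Ioc (0:ℝ) 1
        · obtain ⟨n, hn⟩ := helly_find hω
          exact ⟨n+1, hn⟩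
        · exact ⟨0, hω⟩
    -- the sequence of elements of E
    set x : ℕ → (ℝ →ₘ[μ] ℂ) := fun n => match n with
      | 0 => 0
      | (m+1) => indC (P := μ)
          (Set.Icc (((2:ℝ)^(m+1))⁻¹) (((2:ℝ)^m)⁻¹)) measurableSet_Icc with hx
    have hxmem : ∀ n, x n ∈ (Submodule.span (ℝ →ₘ[μ] ℂ) S : Set (ℝ →ₘ[μ] ℂ)) := by
      intro n
      match n with
      | 0 => exact Submodule.zero_mem _
      | (m+1) => exact Submodule.subset_span ⟨m, rfl⟩
    obtain ⟨x0, hx0E, hspec⟩ := hccp A hApart x hxmem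
    -- x0 = 1 a.e. on each stratum
    have key : ∀ n : ℕ, ∀ᵐ ω ∂μ, ω ∈ A (n+1) → x0 ω = 1 := by
      intro n
      have hsm : ∀ g : ℝ →ₘ[μ] ℂ,
          indC (P := μ) (A (n+1)) (hApart.meas (n+1)) • g
            = indC (P := μ) (A (n+1)) (hApart.meas (n+1)) * g := fun g => rfl
      have he : ⇑(indC (P := μ) (A (n+1)) (hApart.meas (n+1)) * x0)
          =ᵐ[μ] ⇑(indC (P := μ) (A (n+1)) (hApart.meas (n+1)) * x (n+1)) := by
        rw [← hsm, ← hsm, hspec (n+1)]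
      have hxn : x (n+1) = indC (P := μ)
          (Set.Icc (((2:ℝ)^(n+1))⁻¹) (((2:ℝ)^n)⁻¹)) measurableSet_Icc := rfl
      filter_upwards [he, mul_ae (indC (P := μ) (A (n+1)) (hApart.meas (n+1))) x0,
        mul_ae (indC (P := μ) (A (n+1)) (hApart.meas (n+1))) (x (n+1)),
        helly_indC_coe (P := μ) (A (n+1)) (hApart.meas (n+1)),
        helly_indC_coe (P := μ)
          (Set.Icc (((2:ℝ)^(n+1))⁻¹) (((2:ℝ)^n)⁻¹)) measurableSet_Icc]
        with ω h1 h2 h3 h4 h5 hω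
      rw [h2, h3, h4] at h1
      rw [hxn] at h1
      rw [h5] at h1
      rw [Set.indicator_of_mem hω] at h1
      have hωI : ω ∈ Set.Icc (((2:ℝ)^(n+1))⁻¹) (((2:ℝ)^n)⁻¹) :=
        Set.Ioc_subset_Icc_self hω
      rw [Set.indicator_of_mem hωI] at h1
      simpa using h1
    -- μ-a.e. ω lies in (0,1]
    have hcov : ∀ᵐ ω ∂μ, ω ∈ Set.Ioc (0:ℝ) 1 := by
      have hnull : μ ((Set.Ioc (0:ℝ) 1)ᶜ) = 0 := by
        rw [hμ, Measure.restrict_apply measurableSet_Ioc.compl]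
        refine measure_mono_null (t := {0}) (fun ω hω => ?_) (Real.volume_singleton (a := 0))
        have h1 : ¬ (0 < ω ∧ ω ≤ 1) := hω.1
        have h2 : 0 ≤ ω ∧ ω ≤ 1 := hω.2
        have : ω = 0 := by
          by_contra hne
          exact h1 ⟨lt_of_le_of_ne h2.1 (Ne.symm hne), h2.2⟩
        exact this
      rw [ae_iff]
      exact hnull
    have hx01 : x0 = (1 : ℝ →ₘ[μ] ℂ) := by
      apply AEEqFun.ext
      filter_upwards [MeasureTheory.ae_all_iff.mpr key, hcov, one_ae ℂ]
        with ω hall hω h1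
      rw [h1]
      obtain ⟨n, hn⟩ := helly_find hω
      exact hall n hn
    exact hone (hx01 ▸ hx0E)
  · -- Part 3 : indicator · 1 = indicator · indicator, with indicator ∈ E
    intro n
    refine ⟨indC (P := μ)
      (Set.Icc (((2:ℝ)^(n+1))⁻¹) (((2:ℝ)^n)⁻¹)) measurableSet_Icc,
      Submodule.subset_span ⟨n, rfl⟩, ?_⟩
    apply AEEqFun.ext
    set I := Set.Icc (((2:ℝ)^(n+1))⁻¹) (((2:ℝ)^n)⁻¹) with hI
    filter_upwards [mul_ae (indC (P := μ) I measurableSet_Icc) 1,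
      mul_ae (indC (P := μ) I measurableSet_Icc) (indC (P := μ) I measurableSet_Icc),
      helly_indC_coe (P := μ) I measurableSet_Icc, one_ae ℂ] with ω h1 h2 h3 h4
    rw [h1, h2, h3, h4, mul_one]
    by_cases hω : ω ∈ I
    · rw [Set.indicator_of_mem hω]; ring
    · rw [Set.indicator_of_notMem hω]; ring
end

section
/- Let (E,‖·‖) be a random normed module over ℂ with base (Ω,𝓕,P) having the countable concatenation property. Then the closed unit ball E*(1) = {f ∈ E* : ‖f‖* ≤ 1} of the random conjugate space is closed in E* with respect to the (ε,λ) weak-star topology σ_{(ε,λ)}(E*,E), and hence also closed with respect to the (stronger) locally L⁰-convex weak-star topology σ_c(E*,E). -/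
open MeasureTheory

section Aux

open MeasureTheory Filter RNM

variable {Ω : Type} [MeasurableSpace Ω] {P : Measure Ω} [IsProbabilityMeasure P]

lemma ballTop_isOpen_iff {X ι : Type*} [Nonempty ι] (ball : X → ι → Set X)
    (dir : ∀ x i j, ∃ k, ball x k ⊆ ball x i ∩ ball x j) (B : Set X) :
    @IsOpen X (ballTop ball dir) B ↔ ∀ x ∈ B, ∃ i, ball x i ⊆ B := Iff.rfl

/-- the "compressing" integral functional `T ξ = ∫ arctan ∘ ξ dP`. -/
noncomputable def Tint (ξ : Ω →ₘ[P] ℝ) : ℝ := ∫ ω, Real.arctan (ξ ω) ∂P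

lemma Tint_integrable (ξ : Ω →ₘ[P] ℝ) :
    Integrable (fun ω => Real.arctan (ξ ω)) P := by
  refine Integrable.mono' (integrable_const (Real.pi / 2))
    (Real.continuous_arctan.comp_aestronglyMeasurable ξ.aestronglyMeasurable)
    (ae_of_all _ fun ω => ?_)
  rw [Real.norm_eq_abs, abs_le]
  exact ⟨(Real.neg_pi_div_two_lt_arctan _).le, (Real.arctan_lt_pi_div_two _).le⟩

lemma Tint_mono {ξ η : Ω →ₘ[P] ℝ} (h : ξ ≤ η) : Tint ξ ≤ Tint η := by
  refine integral_mono_ae (Tint_integrable ξ) (Tint_integrable η) ?_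
  filter_upwards [le_ae h] with ω hω
  exact Real.arctan_strictMono.monotone hω

lemma eq_of_le_of_Tint_eq {ξ η : Ω →ₘ[P] ℝ} (h : ξ ≤ η) (hT : Tint ξ = Tint η) :
    ξ = η := by
  have hnn : 0 ≤ᵐ[P] fun ω => Real.arctan (η ω) - Real.arctan (ξ ω) := by
    filter_upwards [le_ae h] with ω hω
    simp [Real.arctan_strictMono.monotone hω]
  have hint : Integrable (fun ω => Real.arctan (η ω) - Real.arctan (ξ ω)) P :=
    (Tint_integrable η).sub (Tint_integrable ξ)
  have h0 : ∫ ω, (Real.arctan (η ω) - Real.arctan (ξ ω)) ∂P = 0 := by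
    rw [integral_sub (Tint_integrable η) (Tint_integrable ξ)]
    simp only [Tint] at hT
    linarith
  have hae := (integral_eq_zero_iff_of_nonneg_ae hnn hint).1 h0
  refine le_antisymm h (le_of_ae ?_)
  filter_upwards [hae] with ω hω
  have : Real.arctan (η ω) = Real.arctan (ξ ω) := by
    have : Real.arctan (η ω) - Real.arctan (ξ ω) = 0 := hω
    linarith
  exact (Real.arctan_injective this).le

/-- Dedekind completeness of `L⁰(𝓕,ℝ)` over a probability space: every nonempty set
bounded from above has a least upper bound. -/
lemma exists_isLUB_L0 (D : Set (Ω →ₘ[P] ℝ)) (hne : D.Nonempty) {b : Ω →ₘ[P] ℝ}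
    (hb : b ∈ upperBounds D) : ∃ s, IsLUB D s := by
  classical
  have hbD' : b ∈ upperBounds (supClosure D) := by rwa [upperBounds_supClosure]
  have hne' : (supClosure D).Nonempty := hne.mono subset_supClosure
  set A : Set ℝ := Tint '' (supClosure D) with hA
  have hAne : A.Nonempty := hne'.image _
  have hAbdd : BddAbove A := ⟨Tint b, by rintro _ ⟨x, hx, rfl⟩; exact Tint_mono (hbD' hx)⟩
  set M : ℝ := sSup A with hM
  have hchoice : ∀ n : ℕ, ∃ x ∈ supClosure D, M - 1 / (n + 1) < Tint x := by
    intro n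
    have hlt : M - 1 / ((n : ℝ) + 1) < M := by
      have : (0 : ℝ) < 1 / ((n : ℝ) + 1) := by positivity
      linarith
    obtain ⟨a, haA, ha⟩ := exists_lt_of_lt_csSup hAne hlt
    obtain ⟨x, hx, rfl⟩ := haA
    exact ⟨x, hx, ha⟩
  choose x hxD hxT using hchoice
  set y : ℕ → (Ω →ₘ[P] ℝ) := fun n => (Finset.range (n + 1)).sup' ⟨0, by simp⟩ x with hy
  have hyD : ∀ n, y n ∈ supClosure D := fun n =>
    supClosed_supClosure.finsetSup'_mem _ fun i _ => hxD i
  have hymono : Monotone y := fun m n hmn =>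
    Finset.sup'_mono x (Finset.range_subset_range.2 (by omega)) _
  have hyb : ∀ n, y n ≤ b := fun n => Finset.sup'_le _ _ fun i _ => hbD' (hxD i)
  have hxy : ∀ n, x n ≤ y n := fun n => Finset.le_sup' x (Finset.self_mem_range_succ n)
  have hx0y : ∀ n, x 0 ≤ y n := fun n =>
    Finset.le_sup' x (Finset.mem_range.2 (Nat.succ_pos n))
  have hyT_le : ∀ n, Tint (y n) ≤ M := fun n => le_csSup hAbdd ⟨y n, hyD n, rfl⟩
  have hyT_lt : ∀ n, M - 1 / (n + 1) ≤ Tint (y n) := fun n =>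
    (hxT n).le.trans (Tint_mono (hxy n))
  have hTy_tendsto : Tendsto (fun n => Tint (y n)) atTop (nhds M) := by
    refine tendsto_of_tendsto_of_tendsto_of_le_of_le ?_ tendsto_const_nhds hyT_lt hyT_le
    have h0 : Tendsto (fun n : ℕ => 1 / ((n : ℝ) + 1)) atTop (nhds 0) :=
      tendsto_one_div_add_atTop_nhds_zero_nat
    simpa using tendsto_const_nhds.sub h0
  -- build the candidate supremum as a pointwise countable supremum
  set g : Ω → ℝ := fun ω => ⨆ n, (y n) ω with hg
  have hgm : AEStronglyMeasurable g P :=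
    (AEMeasurable.iSup fun n =>
      (y n).aestronglyMeasurable.aemeasurable).aestronglyMeasurable
  set s : Ω →ₘ[P] ℝ := AEEqFun.mk g hgm with hs
  have hsg : ∀ᵐ ω ∂P, s ω = g ω := AEEqFun.coeFn_mk g hgm
  have hmono_ae : ∀ᵐ ω ∂P, ∀ n, (y n) ω ≤ (y (n + 1)) ω :=
    ae_all_iff.2 fun n => le_ae (hymono (Nat.le_succ n))
  have hbd_ae : ∀ᵐ ω ∂P, ∀ n, (y n) ω ≤ b ω := ae_all_iff.2 fun n => le_ae (hyb n)
  have hconv_ae : ∀ᵐ ω ∂P, Tendsto (fun n => (y n) ω) atTop (nhds (g ω)) := by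
    filter_upwards [hmono_ae, hbd_ae] with ω h1 h2
    exact tendsto_atTop_ciSup (monotone_nat_of_le_succ h1)
      ⟨b ω, by rintro _ ⟨m, rfl⟩; exact h2 m⟩
  have hys : ∀ n, y n ≤ s := by
    intro n
    refine le_of_ae ?_
    filter_upwards [hbd_ae, hsg] with ω h1 h2
    rw [h2]
    exact le_ciSup ⟨b ω, by rintro _ ⟨m, rfl⟩; exact h1 m⟩ n
  -- key convergence fact
  have key : ∀ η : Ω →ₘ[P] ℝ,
      Tendsto (fun n => Tint (y n ⊔ η)) atTop (nhds (Tint (s ⊔ η))) := by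
    intro η
    have hEq : ∀ n, Tint (y n ⊔ η) = ∫ ω, Real.arctan (max ((y n) ω) (η ω)) ∂P := by
      intro n
      refine integral_congr_ae ?_
      filter_upwards [AEEqFun.coeFn_sup (y n) η] with ω h
      rw [h]
    have hlim : Tint (s ⊔ η) = ∫ ω, Real.arctan (max (g ω) (η ω)) ∂P := by
      refine integral_congr_ae ?_
      filter_upwards [AEEqFun.coeFn_sup s η, hsg] with ω h1 h2
      rw [h1]
      show Real.arctan (s ω ⊔ η ω) = Real.arctan (max (g ω) (η ω))
      rw [h2]
    have hfun : (fun n => Tint (y n ⊔ η)) =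
        fun n => ∫ ω, Real.arctan (max ((y n) ω) (η ω)) ∂P := funext hEq
    rw [hfun, hlim]
    refine tendsto_integral_of_dominated_convergence (fun _ => Real.pi / 2)
      (fun n => ?_) (integrable_const _) (fun n => ae_of_all _ fun ω => ?_) ?_
    · exact (Real.continuous_arctan.measurable.comp_aemeasurable
        ((y n).aestronglyMeasurable.aemeasurable.sup
          η.aestronglyMeasurable.aemeasurable)).aestronglyMeasurable
    · rw [Real.norm_eq_abs, abs_le]
      exact ⟨(Real.neg_pi_div_two_lt_arctan _).le, (Real.arctan_lt_pi_div_two _).le⟩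
    · filter_upwards [hconv_ae] with ω hω
      exact (Real.continuous_arctan.tendsto _).comp (hω.max tendsto_const_nhds)
  have hTsM : Tint s = M := by
    have h1 := key (x 0)
    have hsx : s ⊔ x 0 = s := sup_eq_left.2 ((hx0y 0).trans (hys 0))
    have heq : ∀ n, y n ⊔ x 0 = y n := fun n => sup_eq_left.2 (hx0y n)
    have h1' : Tendsto (fun n => Tint (y n)) atTop (nhds (Tint s)) := by
      rw [← hsx]
      simpa only [heq] using h1
    exact tendsto_nhds_unique h1' hTy_tendsto
  have hub : s ∈ upperBounds (supClosure D) := by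
    intro η hη
    have h2 : Tint (s ⊔ η) ≤ M := by
      refine le_of_tendsto (key η) (Eventually.of_forall fun n => ?_)
      exact le_csSup hAbdd ⟨y n ⊔ η, supClosed_supClosure (hyD n) hη, rfl⟩
    have h4 : Tint s = Tint (s ⊔ η) :=
      le_antisymm (Tint_mono le_sup_left) (by rw [hTsM]; exact h2)
    have h5 : s = s ⊔ η := eq_of_le_of_Tint_eq le_sup_left h4
    exact sup_eq_left.1 h5.symm
  refine ⟨s, isLUB_supClosure.1 ⟨hub, fun u hu => ?_⟩⟩
  refine le_of_ae ?_
  filter_upwards [hsg, ae_all_iff.2 fun n => le_ae (hu (hyD n))] with ω h1 h2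
  rw [h1]
  exact ciSup_le h2

variable {E : Type*} [AddCommGroup E] [Module (Ω →ₘ[P] ℂ) E]

lemma zero_le_one_L0 : (0 : Ω →ₘ[P] ℝ) ≤ 1 :=
  le_of_ae (by
    filter_upwards [zero_ae (P := P) ℝ, one_ae (P := P) ℝ] with ω h1 h2
    rw [h1, h2]; norm_num)

lemma dnorm_le_one_iff (nrm : E → Ω →ₘ[P] ℝ) (hnrm : IsRNNorm nrm)
    {f : E →ₗ[Ω →ₘ[P] ℂ] Ω →ₘ[P] ℂ} (hf : f ∈ rdual nrm) :
    dnorm nrm f ≤ 1 ↔ ∀ y, nrm y ≤ 1 → L0abs (f y) ≤ 1 := by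
  obtain ⟨ξ, hξ0, hξ⟩ := hf
  have hnrm0 : nrm 0 = 0 := (hnrm.eq_zero_iff 0).2 rfl
  have hmem0 : L0abs (f 0) ∈ {a | ∃ y : E, nrm y ≤ 1 ∧ a = L0abs (f y)} :=
    ⟨0, by rw [hnrm0]; exact zero_le_one_L0, rfl⟩
  have hbound : ξ ∈ upperBounds {a | ∃ y : E, nrm y ≤ 1 ∧ a = L0abs (f y)} := by
    rintro a ⟨y, hy, rfl⟩
    refine (hξ y).trans (le_of_ae ?_)
    filter_upwards [mul_ae ξ (nrm y), le_ae hξ0, le_ae hy, zero_ae (P := P) ℝ,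
      one_ae (P := P) ℝ] with ω h1 h2 h3 h4 h5
    rw [h1]
    rw [h4] at h2
    rw [h5] at h3
    exact mul_le_of_le_one_right h2 h3
  have hex : ∃ s, IsLUB {a | ∃ y : E, nrm y ≤ 1 ∧ a = L0abs (f y)} s :=
    exists_isLUB_L0 _ ⟨_, hmem0⟩ hbound
  unfold dnorm
  rw [dif_pos hex]
  constructor
  · intro h y hy
    exact (hex.choose_spec.1 ⟨y, hy, rfl⟩).trans h
  · intro h
    exact hex.choose_spec.2 (by rintro a ⟨y, hy, rfl⟩; exact h y hy)

lemma unitBall_pred_closed (nrm : E → Ω →ₘ[P] ℝ) :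
    @IsClosed (E →ₗ[Ω →ₘ[P] ℂ] Ω →ₘ[P] ℂ) (sigmaElTop P E)
      {g | ∀ y, nrm y ≤ 1 → L0abs (g y) ≤ 1} := by
  rw [← @isOpen_compl_iff _ _ (sigmaElTop P E)]
  refine (ballTop_isOpen_iff _ _ _).2 ?_
  intro g hg
  simp only [Set.mem_compl_iff, Set.mem_setOf_eq, not_forall] at hg
  obtain ⟨y, hy, hgy⟩ := hg
  -- positive measure where |g y| exceeds 1
  have h1 : P {ω | 1 < (L0abs (g y)) ω} ≠ 0 := by
    intro h0
    apply hgy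
    refine le_of_ae ?_
    have hae : ∀ᵐ ω ∂P, (L0abs (g y)) ω ≤ 1 := by
      rw [ae_iff]; simpa [not_le] using h0
    filter_upwards [hae, one_ae (P := P) ℝ] with ω hω h1'
    rw [h1']; exact hω
  clear hgy
  have h2 : ∃ r : ℝ, 0 < r ∧ P {ω | 1 + r ≤ (L0abs (g y)) ω} ≠ 0 := by
    by_contra hcon
    push_neg at hcon
    apply h1
    have hsub : {ω | 1 < (L0abs (g y)) ω} ⊆
        ⋃ n : ℕ, {ω | 1 + 1 / ((n : ℝ) + 1) ≤ (L0abs (g y)) ω} := by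
      intro ω hω
      obtain ⟨n, hn⟩ := exists_nat_one_div_lt
        (show (0 : ℝ) < (L0abs (g y)) ω - 1 by simpa [sub_pos] using hω)
      exact Set.mem_iUnion.2 ⟨n, by simp only [Set.mem_setOf_eq]; linarith⟩
    refine measure_mono_null hsub (measure_iUnion_null fun n => ?_)
    exact hcon (1 / ((n : ℝ) + 1)) (by positivity)
  obtain ⟨r, hr, hrP⟩ := h2
  set A : Set Ω := {ω | 1 + r ≤ (L0abs (g y)) ω} with hA
  set d : ℝ := (P A).toReal with hd
  have hd0 : 0 < d := ENNReal.toReal_pos hrP (measure_ne_top P A)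
  set l : ℝ := min (d / 2) (1 / 2) with hl
  have hl0 : 0 < l := lt_min (by linarith) (by norm_num)
  have hl1 : l < 1 := (min_le_right _ _).trans_lt (by norm_num)
  have hlA : ENNReal.ofReal l < P A := by
    calc ENNReal.ofReal l ≤ ENNReal.ofReal (d / 2) :=
          ENNReal.ofReal_le_ofReal (min_le_left _ _)
      _ < ENNReal.ofReal d := by
          rw [ENNReal.ofReal_lt_ofReal_iff hd0]; linarith
      _ = P A := ENNReal.ofReal_toReal (measure_ne_top P A)
  refine ⟨⟨{y}, ⟨r / 2, by linarith⟩, ⟨l, hl0, hl1⟩⟩, fun h hh => ?_⟩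
  simp only [Set.mem_setOf_eq, Finset.mem_singleton, forall_eq] at hh
  -- hh : ENNReal.ofReal (1 - l) < P {ω | L0abs (h y - g y) ω < r / 2}
  set B : Set Ω := {ω | (L0abs (h y - g y)) ω < r / 2} with hB
  intro hC
  have hhy : L0abs (h y) ≤ 1 := hC y hy
  -- A ∩ B is a.e. empty
  have hAB : P (A ∩ B) = 0 := by
    rw [measure_eq_zero_iff_ae_notMem]
    filter_upwards [L0abs_ae (g y), L0abs_ae (h y), L0abs_ae (h y - g y),
      sub_ae (h y) (g y), le_ae hhy, one_ae (P := P) ℝ] with ω e1 e2 e3 e4 e5 e6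
    rintro ⟨hA', hB'⟩
    simp only [hA, hB, Set.mem_setOf_eq] at hA' hB'
    rw [e1] at hA'
    rw [e3, e4] at hB'
    rw [e2, e6] at e5
    have htri : ‖(g y) ω‖ ≤
        ‖(h y) ω - (g y) ω‖ + ‖(h y) ω‖ := by
      have := norm_add_le ((g y) ω - (h y) ω) ((h y) ω)
      simp only [sub_add_cancel] at this
      calc ‖(g y) ω‖ ≤
            ‖(g y) ω - (h y) ω‖ + ‖(h y) ω‖ := this
        _ = ‖(h y) ω - (g y) ω‖ + ‖(h y) ω‖ := by
            rw [norm_sub_rev]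
    linarith
  have hBmeas : MeasurableSet B :=
    measurableSet_lt ((L0abs (h y - g y)).stronglyMeasurable.measurable) measurable_const
  have hPA_le : P A ≤ P Bᶜ := by
    calc P A ≤ P ((A ∩ B) ∪ Bᶜ) := measure_mono (fun ω hω => by
          by_cases hωB : ω ∈ B
          · exact Or.inl ⟨hω, hωB⟩
          · exact Or.inr hωB)
      _ ≤ P (A ∩ B) + P Bᶜ := measure_union_le _ _
      _ = P Bᶜ := by rw [hAB, zero_add]
  have hsum : P B + P Bᶜ = 1 := by
    rw [measure_add_measure_compl hBmeas, measure_univ]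
  have : (1 : ENNReal) < 1 := by
    calc (1 : ENNReal) = ENNReal.ofReal (1 - l) + ENNReal.ofReal l := by
          rw [← ENNReal.ofReal_add (by linarith) hl0.le]
          norm_num
      _ < P B + P Bᶜ := ENNReal.add_lt_add hh (hlA.trans_le hPA_le)
      _ = 1 := hsum
  exact absurd this (lt_irrefl _)

lemma sigmaC_le_sigmaEl : sigmaCTop P E ≤ sigmaElTop P E := by
  intro V hV
  refine (ballTop_isOpen_iff _ _ _).2 ?_
  intro g hgV
  replace hV := (ballTop_isOpen_iff _ _ _).1 hV g hgV
  obtain ⟨⟨t, ⟨e, he⟩, ⟨l, hl0, hl1⟩⟩, hball⟩ := hV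
  have hconst : L0pos (AEEqFun.const Ω (e : ℝ) : Ω →ₘ[P] ℝ) := by
    filter_upwards [AEEqFun.coeFn_const (α := Ω) (μ := P) (e : ℝ)] with ω h
    rw [h]; exact he
  refine ⟨⟨t, ⟨AEEqFun.const Ω (e : ℝ), hconst⟩⟩, fun h hh => hball ?_⟩
  intro x hx
  have hx' := hh x hx
  have hfull : ∀ᵐ ω ∂P, (L0abs (h x - g x)) ω < e := by
    filter_upwards [hx', AEEqFun.coeFn_const (α := Ω) (μ := P) (e : ℝ)] with ω h1 h2
    rw [h2] at h1; exact h1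
  have h0 : P {ω | ¬ (L0abs (h x - g x)) ω < e} = 0 := ae_iff.1 hfull
  have h1' : (1 : ENNReal) ≤ P {ω | (L0abs (h x - g x)) ω < e} := by
    calc (1 : ENNReal) = P Set.univ := measure_univ.symm
      _ ≤ P {ω | (L0abs (h x - g x)) ω < e} + P {ω | ¬ (L0abs (h x - g x)) ω < e} := by
          refine (measure_mono (fun ω _ => ?_)).trans (measure_union_le _ _)
          by_cases hω : (L0abs (h x - g x)) ω < e
          · exact Or.inl hω
          · exact Or.inr hω
      _ = P {ω | (L0abs (h x - g x)) ω < e} := by rw [h0, add_zero]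
  exact lt_of_lt_of_le (ENNReal.ofReal_lt_one.2 (by linarith)) h1'

end Aux

open MeasureTheory RNM in
/-- Lemma 4.1: if `E` has the countable concatenation property, the closed unit ball of
the random conjugate space `E*` is closed for both the `(ε,λ)` weak star topology
`σ_{(ε,λ)}(E*,E)` and the locally `L⁰`-convex weak star topology `σ_c(E*,E)`. -/
theorem unit_ball_weak_star_closed {Ω : Type} [MeasurableSpace Ω] {P : Measure Ω}
    [IsProbabilityMeasure P] {E : Type*} [AddCommGroup E] [Module (Ω →ₘ[P] ℂ) E]
    (nrm : E → Ω →ₘ[P] ℝ) (hnrm : IsRNNorm nrm) (hccp : HasCCP P E) :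
    @IsClosed ↥(rdual nrm)
      (TopologicalSpace.induced (Subtype.val) (sigmaElTop P E))
      {f : ↥(rdual nrm) | dnorm nrm f.1 ≤ 1} ∧
    @IsClosed ↥(rdual nrm)
      (TopologicalSpace.induced (Subtype.val) (sigmaCTop P E))
      {f : ↥(rdual nrm) | dnorm nrm f.1 ≤ 1} := by
  have hSet : {f : ↥(rdual nrm) | dnorm nrm f.1 ≤ 1} =
      (Subtype.val) ⁻¹' {g | ∀ y, nrm y ≤ 1 → L0abs (g y) ≤ 1} := by
    ext f
    exact dnorm_le_one_iff nrm hnrm f.2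
  have hC := unitBall_pred_closed (P := P) nrm
  have h1 : @IsClosed ↥(rdual nrm)
      (TopologicalSpace.induced (Subtype.val) (sigmaElTop P E))
      {f : ↥(rdual nrm) | dnorm nrm f.1 ≤ 1} := by
    rw [hSet]
    letI : TopologicalSpace (E →ₗ[Ω →ₘ[P] ℂ] Ω →ₘ[P] ℂ) := sigmaElTop P E
    letI : TopologicalSpace ↥(rdual nrm) :=
      TopologicalSpace.induced Subtype.val (sigmaElTop P E)
    exact IsClosed.preimage continuous_induced_dom hC
  exact ⟨h1, h1.mono (induced_mono sigmaC_le_sigmaEl)⟩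
end

section
/- Let (E,‖·‖) be a random normed module over ℂ with base (Ω,𝓕,P) having the countable concatenation property, and suppose g ∈ E* satisfies: there exist A ∈ 𝓕 with P(A) > 0 and δ > 0 such that ‖g‖* > 1 + δ a.e. on A. Then there exists x ∈ E with ‖x‖ ≤ (1 + δ/2)·Ĩ_A and g(x) = Ĩ_A · ‖g‖*. -/
open MeasureTheory

namespace RNMHelper
open MeasureTheory RNM

variable {Ω : Type} [MeasurableSpace Ω] {P : Measure Ω}

/-- a measurable representative of an element of `L⁰(𝓕,ℝ)`. -/
noncomputable def mrep (f : Ω →ₘ[P] ℝ) : Ω → ℝ := f.aestronglyMeasurable.mk f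

lemma measurable_mrep (f : Ω →ₘ[P] ℝ) : Measurable (mrep f) :=
  f.aestronglyMeasurable.stronglyMeasurable_mk.measurable

lemma mrep_ae (f : Ω →ₘ[P] ℝ) : ∀ᵐ ω ∂P, f ω = mrep f ω :=
  f.aestronglyMeasurable.ae_eq_mk

lemma indC_ae (A : Set Ω) (hA : MeasurableSet A) :
    ∀ᵐ ω ∂P, (indC (P := P) A hA) ω = A.indicator (fun _ => (1:ℂ)) ω :=
  AEEqFun.coeFn_mk _ _

lemma indR_ae (A : Set Ω) (hA : MeasurableSet A) :
    ∀ᵐ ω ∂P, (indR (P := P) A hA) ω = A.indicator (fun _ => (1:ℝ)) ω :=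
  AEEqFun.coeFn_mk _ _

lemma L0abs_indC_ae (A : Set Ω) (hA : MeasurableSet A) :
    ∀ᵐ ω ∂P, (L0abs (indC (P := P) A hA)) ω = A.indicator (fun _ => (1:ℝ)) ω := by
  filter_upwards [L0abs_ae (indC (P := P) A hA), indC_ae A hA] with ω h1 h2
  rw [h1, h2]
  by_cases h : ω ∈ A <;> simp [h]

lemma ofRealC_ae (ξ : Ω →ₘ[P] ℝ) : ∀ᵐ ω ∂P, (ofRealC ξ) ω = (ξ ω : ℂ) :=
  AEEqFun.coeFn_comp _ _ ξ

/-- pointwise inversion on `L⁰(𝓕,ℂ)` (with the junk value `0⁻¹ = 0`). -/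
noncomputable def L0inv (ξ : Ω →ₘ[P] ℂ) : Ω →ₘ[P] ℂ :=
  AEEqFun.mk (fun ω => (ξ ω)⁻¹)
    (ξ.aestronglyMeasurable.aemeasurable.inv.aestronglyMeasurable)

lemma L0inv_ae (ξ : Ω →ₘ[P] ℂ) : ∀ᵐ ω ∂P, (L0inv ξ) ω = (ξ ω)⁻¹ :=
  AEEqFun.coeFn_mk _ _

section Combine

variable {E : Type*} [AddCommGroup E] [Module (Ω →ₘ[P] ℂ) E]

/-- combination of two unit-ball vectors achieving the max of `|g · |`. -/
lemma combine {nrm : E → Ω →ₘ[P] ℝ} (hnrm : IsRNNorm nrm)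
    (g : E →ₗ[Ω →ₘ[P] ℂ] (Ω →ₘ[P] ℂ)) {y1 y2 : E}
    (h1 : nrm y1 ≤ 1) (h2 : nrm y2 ≤ 1) :
    ∃ y, nrm y ≤ 1 ∧ ∀ᵐ ω ∂P,
      (L0abs (g y)) ω = max ((L0abs (g y1)) ω) ((L0abs (g y2)) ω) := by
  classical
  set B : Set Ω := {ω | mrep (L0abs (g y2)) ω ≤ mrep (L0abs (g y1)) ω} with hBdef
  have hB : MeasurableSet B :=
    measurableSet_le (measurable_mrep _) (measurable_mrep _)
  refine ⟨indC (P := P) B hB • y1 + indC (P := P) Bᶜ hB.compl • y2, ?_, ?_⟩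
  · have hle := hnrm.add_le (indC (P := P) B hB • y1) (indC (P := P) Bᶜ hB.compl • y2)
    rw [hnrm.smul_eq, hnrm.smul_eq] at hle
    apply le_of_ae
    filter_upwards [le_ae hle, add_ae (L0abs (indC (P := P) B hB) * nrm y1)
        (L0abs (indC (P := P) Bᶜ hB.compl) * nrm y2),
      mul_ae (L0abs (indC (P := P) B hB)) (nrm y1),
      mul_ae (L0abs (indC (P := P) Bᶜ hB.compl)) (nrm y2),
      L0abs_indC_ae B hB, L0abs_indC_ae Bᶜ hB.compl,
      le_ae h1, le_ae h2, one_ae (P := P) ℝ] with ω ha hb hc hd he hf hg1 hg2 hone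
    rw [hone]
    rw [hone] at hg1 hg2
    rw [hb, hc, hd, he, hf] at ha
    by_cases hω : ω ∈ B
    · rw [Set.indicator_of_mem hω, Set.indicator_of_notMem (Set.notMem_compl_iff.2 hω)] at ha
      exact ha.trans (by simpa using hg1)
    · rw [Set.indicator_of_notMem hω, Set.indicator_of_mem (Set.mem_compl hω)] at ha
      exact ha.trans (by simpa using hg2)
  · have hgy : g (indC (P := P) B hB • y1 + indC (P := P) Bᶜ hB.compl • y2)
        = indC (P := P) B hB * g y1 + indC (P := P) Bᶜ hB.compl * g y2 := by
      rw [map_add, LinearMap.map_smul, LinearMap.map_smul, smul_eq_mul, smul_eq_mul]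
    filter_upwards [L0abs_ae (g (indC (P := P) B hB • y1 + indC (P := P) Bᶜ hB.compl • y2)),
      (hgy ▸ (Filter.EventuallyEq.refl _ _) :
        ∀ᵐ ω ∂P, (g (indC (P := P) B hB • y1 + indC (P := P) Bᶜ hB.compl • y2)) ω
          = (indC (P := P) B hB * g y1 + indC (P := P) Bᶜ hB.compl * g y2) ω),
      add_ae (indC (P := P) B hB * g y1) (indC (P := P) Bᶜ hB.compl * g y2),
      mul_ae (indC (P := P) B hB) (g y1), mul_ae (indC (P := P) Bᶜ hB.compl) (g y2),
      indC_ae B hB, indC_ae Bᶜ hB.compl,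
      L0abs_ae (g y1), L0abs_ae (g y2),
      mrep_ae (L0abs (g y1)), mrep_ae (L0abs (g y2))]
      with ω h0 hval hadd hm1 hm2 hi1 hi2 ha1 ha2 hr1 hr2
    rw [h0, hval, hadd, hm1, hm2, hi1, hi2, ha1, ha2]
    by_cases hω : ω ∈ B
    · have hcmp : ‖g y2 ω‖ ≤ ‖g y1 ω‖ := by
        have := hω
        rw [hBdef] at this
        simp only [Set.mem_setOf_eq] at this
        rw [← hr1, ← hr2, ha1, ha2] at this
        exact this
      simp [Set.indicator_of_mem hω, Set.indicator_of_notMem (Set.notMem_compl_iff.2 hω),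
        max_eq_left hcmp]
    · have hcmp : ‖g y1 ω‖ ≤ ‖g y2 ω‖ := by
        have : ¬ (mrep (L0abs (g y2)) ω ≤ mrep (L0abs (g y1)) ω) := hω
        rw [← hr1, ← hr2, ha1, ha2] at this
        linarith [not_le.1 this]
      simp [Set.indicator_of_notMem hω, Set.indicator_of_mem (Set.mem_compl hω),
        max_eq_right hcmp]

end Combine

end RNMHelper

open RNMHelper

open MeasureTheory RNM in
/-- The key step (via the Helly theorem) in the proof of Lemma 4.1: if `E` has the
countable concatenation property, `g ∈ E*`, and `‖g‖* > 1 + δ` a.e. on a set `A` of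
positive measure, then there is `x ∈ E` with `‖x‖ ≤ (1 + δ/2) Ĩ_A` and
`g(x) = Ĩ_A ‖g‖*`. -/
theorem attainment_on_stratum {Ω : Type} [MeasurableSpace Ω] {P : Measure Ω}
    [IsProbabilityMeasure P] {E : Type*} [AddCommGroup E] [Module (Ω →ₘ[P] ℂ) E]
    (nrm : E → Ω →ₘ[P] ℝ) (hnrm : IsRNNorm nrm) (hccp : HasCCP P E)
    (g : E →ₗ[Ω →ₘ[P] ℂ] (Ω →ₘ[P] ℂ)) (hg : g ∈ rdual nrm)
    (A : Set Ω) (hA : MeasurableSet A) (hPA : 0 < P A) (δ : ℝ) (hδ : 0 < δ)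
    (hbig : ∀ᵐ ω ∂P, ω ∈ A → 1 + δ < (dnorm nrm g) ω) :
    ∃ x : E, nrm x ≤ (1 + δ / 2) • indR A hA ∧
      g x = indC A hA * ofRealC (dnorm nrm g) := by
  classical
  by_cases hex : ∃ s : Ω →ₘ[P] ℝ, IsLUB {a | ∃ y : E, nrm y ≤ 1 ∧ a = L0abs (g y)} s
  swap
  · exfalso
    have hN0 : dnorm nrm g = 0 := by unfold dnorm; rw [dif_neg hex]
    have hnA : ∀ᵐ ω ∂P, ω ∉ A := by
      filter_upwards [hbig, zero_ae (P := P) ℝ] with ω h1 h2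
      intro hω
      have h3 := h1 hω
      rw [hN0, h2] at h3
      linarith
    have hPA0 : P A = 0 := measure_eq_zero_iff_ae_notMem.2 hnA
    exact absurd hPA0 hPA.ne'
  · have hN : IsLUB {a | ∃ y : E, nrm y ≤ 1 ∧ a = L0abs (g y)} (dnorm nrm g) := by
      unfold dnorm; rw [dif_pos hex]; exact hex.choose_spec
    set N := dnorm nrm g with hNdef
    set c : ℝ := (1 + δ / 2)⁻¹ with hcdef
    have hc0 : 0 < c := by rw [hcdef]; positivity
    have hc1 : c < 1 := by rw [hcdef]; rw [inv_lt_one_iff₀]; right; linarith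
    set Bset : E → Set Ω := fun y => A ∩ {ω | c * mrep N ω < mrep (L0abs (g y)) ω}
      with hBsetdef
    have hBm : ∀ y, MeasurableSet (Bset y) := fun y =>
      hA.inter (measurableSet_lt ((measurable_mrep N).const_mul c) (measurable_mrep _))
    have hunit : nrm (0 : E) ≤ 1 := by
      rw [(hnrm.eq_zero_iff 0).2 rfl]
      apply le_of_ae
      filter_upwards [zero_ae (P := P) ℝ, one_ae (P := P) ℝ] with ω h0 h1
      rw [h0, h1]; norm_num
    have : Nonempty {y : E // nrm y ≤ 1} := ⟨⟨0, hunit⟩⟩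
    set s : ENNReal := ⨆ y : {y : E // nrm y ≤ 1}, P (Bset y.1) with hsdef
    have hs_top : s ≠ ⊤ := by
      refine (lt_of_le_of_lt (iSup_le fun y => ?_) ENNReal.one_lt_top).ne
      exact prob_le_one
    -- choose an approximating sequence for the supremum `s`
    have hyex : ∀ n : ℕ, ∃ y : {y : E // nrm y ≤ 1}, s - ((n : ENNReal))⁻¹ ≤ P (Bset y.1) := by
      intro n
      by_cases h0 : s - ((n : ENNReal))⁻¹ = 0
      · exact ⟨⟨0, hunit⟩, by rw [h0]; exact (by simp)⟩
      · have hs0 : s ≠ 0 := by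
          intro h
          exact h0 (by rw [h, zero_tsub])
        have hlt : s - ((n : ENNReal))⁻¹ < s :=
          ENNReal.sub_lt_self hs_top hs0 (by simp)
        rw [hsdef] at hlt
        obtain ⟨y, hy⟩ := lt_iSup_iff.1 hlt
        exact ⟨y, hy.le⟩
    choose yseq hyseq using hyex
    -- build an increasing (in `|g ·|`) sequence out of it
    have hcomb : ∀ y1 : {y : E // nrm y ≤ 1}, ∀ y2 : {y : E // nrm y ≤ 1},
        ∃ y : {y : E // nrm y ≤ 1}, ∀ᵐ ω ∂P,
          (L0abs (g y.1)) ω = max ((L0abs (g y1.1)) ω) ((L0abs (g y2.1)) ω) := by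
      intro y1 y2
      obtain ⟨y, hy, hmax⟩ := RNMHelper.combine hnrm g y1.2 y2.2
      exact ⟨⟨y, hy⟩, hmax⟩
    choose combFn hcombFn using hcomb
    set z : ℕ → {y : E // nrm y ≤ 1} :=
      fun n => Nat.rec (yseq 0) (fun k zk => combFn zk (yseq (k + 1))) n with hzdef
    have hzsucc : ∀ n, z (n + 1) = combFn (z n) (yseq (n + 1)) := fun n => by rw [hzdef]
    -- a.e. chain monotonicity
    have hchain : ∀ᵐ ω ∂P, ∀ k m : ℕ, k ≤ m →
        (L0abs (g (z k).1)) ω ≤ (L0abs (g (z m).1)) ω := by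
      have hstep : ∀ᵐ ω ∂P, ∀ k, (L0abs (g (z k).1)) ω ≤ (L0abs (g (z (k + 1)).1)) ω := by
        rw [ae_all_iff]
        intro k
        filter_upwards [hcombFn (z k) (yseq (k + 1))] with ω h
        rw [hzsucc k, h]
        exact le_max_left _ _
      filter_upwards [hstep] with ω h
      intro k m hkm
      exact monotone_nat_of_le_succ h hkm
    have hyz : ∀ n, ∀ᵐ ω ∂P, (L0abs (g (yseq n).1)) ω ≤ (L0abs (g (z n).1)) ω := by
      intro n
      cases n with
      | zero =>
        filter_upwards with ω
        rw [hzdef]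
        exact le_rfl
      | succ k =>
        filter_upwards [hcombFn (z k) (yseq (k + 1))] with ω h
        rw [hzsucc k, h]
        exact le_max_right _ _
    -- a.e. inclusion of B-sets
    have hBsub : ∀ (y y' : E), (∀ᵐ ω ∂P, (L0abs (g y)) ω ≤ (L0abs (g y')) ω) →
        Bset y ≤ᶠ[MeasureTheory.ae P] Bset y' := by
      intro y y' hab
      rw [MeasureTheory.ae_le_set]
      have himp : ∀ᵐ ω ∂P, ω ∈ Bset y → ω ∈ Bset y' := by
        filter_upwards [hab, mrep_ae (L0abs (g y)), mrep_ae (L0abs (g y'))] with ω h1 h2 h3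
        intro hω
        rw [hBsetdef] at hω ⊢
        refine ⟨hω.1, ?_⟩
        have h4 : c * mrep N ω < mrep (L0abs (g y)) ω := hω.2
        show c * mrep N ω < mrep (L0abs (g y')) ω
        rw [← h3]
        rw [← h2] at h4
        linarith
      have h0 : P {ω | ¬ (ω ∈ Bset y → ω ∈ Bset y')} = 0 := ae_iff.1 himp
      refine measure_mono_null ?_ h0
      intro ω hω h'
      exact hω.2 (h' hω.1)
    set Binf : Set Ω := ⋃ n, Bset (z n).1 with hBinfdef
    have hBinfm : MeasurableSet Binf := MeasurableSet.iUnion fun n => hBm _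
    have hsB : s ≤ P Binf := by
      refine ENNReal.le_of_forall_pos_le_add fun ε hε _ => ?_
      obtain ⟨n, hn⟩ := ENNReal.exists_inv_nat_lt
        (ENNReal.coe_ne_zero.2 hε.ne' : ((ε : ENNReal)) ≠ 0)
      have h1 : P (Bset (yseq n).1) ≤ P (Bset (z n).1) :=
        measure_mono_ae (hBsub _ _ (hyz n))
      have h2 : P (Bset (z n).1) ≤ P Binf :=
        measure_mono (hBinfdef ▸ Set.subset_iUnion (fun n => Bset (z n).1) n)
      have h3 : s ≤ P Binf + ((n : ENNReal))⁻¹ :=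
        tsub_le_iff_right.1 ((hyseq n).trans (h1.trans h2))
      exact h3.trans (add_le_add_right hn.le _)
    have hPy : ∀ y : E, nrm y ≤ 1 → P (Bset y \ Binf) = 0 := by
      intro y hy
      set W : ℕ → Set Ω := fun n => Bset y ∪ ⋃ k, ⋃ (_ : k ≤ n), Bset (z k).1 with hWdef
      have hWmono : Monotone W := fun a b hab => Set.union_subset_union_right _
        (Set.iUnion_mono fun k => Set.iUnion_subset fun hk =>
          Set.subset_iUnion (fun _ : k ≤ b => Bset (z k).1) (hk.trans hab))
      have hWle : ∀ n, P (W n) ≤ s := by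
        intro n
        have himp : ∀ᵐ ω ∂P, ω ∈ W n → ω ∈ Bset (combFn ⟨y, hy⟩ (z n)).1 := by
          filter_upwards [hchain, hcombFn ⟨y, hy⟩ (z n), mrep_ae (L0abs (g y)),
            mrep_ae (L0abs (g (combFn ⟨y, hy⟩ (z n)).1)),
            (ae_all_iff.2 fun k => mrep_ae (L0abs (g (z k).1)) :
              ∀ᵐ ω ∂P, ∀ k, (L0abs (g (z k).1)) ω = mrep (L0abs (g (z k).1)) ω)]
            with ω h1 h2 h3 h4 h5
          intro hω
          rw [hWdef] at hω
          rw [hBsetdef]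
          rcases hω with hω | hω
          · rw [hBsetdef] at hω
            refine ⟨hω.1, ?_⟩
            have h6 : c * mrep N ω < mrep (L0abs (g y)) ω := hω.2
            show c * mrep N ω < mrep (L0abs (g (combFn ⟨y, hy⟩ (z n)).1)) ω
            rw [← h4, h2]
            rw [← h3] at h6
            exact lt_of_lt_of_le h6 (le_max_left _ _)
          · obtain ⟨k, hω2⟩ := Set.mem_iUnion.1 hω
            obtain ⟨hk, hω3⟩ := Set.mem_iUnion.1 hω2
            rw [hBsetdef] at hω3
            refine ⟨hω3.1, ?_⟩
            have h6 : c * mrep N ω < mrep (L0abs (g (z k).1)) ω := hω3.2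
            show c * mrep N ω < mrep (L0abs (g (combFn ⟨y, hy⟩ (z n)).1)) ω
            rw [← h4, h2]
            rw [← h5 k] at h6
            exact lt_of_lt_of_le h6 ((h1 k n hk).trans (le_max_right _ _))
        have hnull : P (W n \ Bset (combFn ⟨y, hy⟩ (z n)).1) = 0 := by
          have h0 : P {ω | ¬ (ω ∈ W n → ω ∈ Bset (combFn ⟨y, hy⟩ (z n)).1)} = 0 :=
            ae_iff.1 himp
          refine measure_mono_null ?_ h0
          intro ω hω h'
          exact hω.2 (h' hω.1)
        calc P (W n) ≤ P (Bset (combFn ⟨y, hy⟩ (z n)).1) :=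
              measure_mono_ae (MeasureTheory.ae_le_set.2 hnull)
          _ ≤ s := by
              rw [hsdef]
              exact le_iSup (fun y : {y : E // nrm y ≤ 1} => P (Bset y.1))
                (combFn ⟨y, hy⟩ (z n))
      have htend := tendsto_measure_iUnion_atTop (μ := P) hWmono
      have hle2 : P (⋃ n, W n) ≤ s := le_of_tendsto htend (Filter.Eventually.of_forall hWle)
      have hsub2 : Bset y ∪ Binf ⊆ ⋃ n, W n := by
        apply Set.union_subset
        · exact (Set.subset_union_left (t := ⋃ k, ⋃ (_ : k ≤ 0), Bset (z k).1)).trans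
            (Set.subset_iUnion W 0)
        · rw [hBinfdef]
          refine Set.iUnion_subset fun n => ?_
          refine Set.subset_iUnion_of_subset n ?_
          rw [hWdef]
          exact Set.subset_union_of_subset_right
            (Set.subset_iUnion_of_subset n
              (Set.subset_iUnion (fun _ : n ≤ n => Bset (z n).1) le_rfl)) _
      have hun : P (Bset y \ Binf) + P Binf = P ((Bset y \ Binf) ∪ Binf) :=
        (measure_union Set.disjoint_sdiff_left hBinfm).symm
      have hle3 : P ((Bset y \ Binf) ∪ Binf) ≤ s := by
        refine le_trans (measure_mono ?_) hle2
        rw [Set.diff_union_self]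
        exact hsub2
      have hfin : P (Bset y \ Binf) + P Binf ≤ 0 + P Binf := by
        rw [zero_add]
        exact (hun.trans_le hle3).trans hsB
      have h4 := (ENNReal.add_le_add_iff_right (measure_ne_top P Binf)).1 hfin
      exact le_antisymm h4 (by simp)
    have hAB : P (A \ Binf) = 0 := by
      set Mf : Ω → ℝ := (A \ Binf).piecewise (fun ω => c * mrep N ω) (mrep N) with hMfdef
      have hMfm : Measurable Mf :=
        Measurable.piecewise (hA.diff hBinfm) ((measurable_mrep N).const_mul c)
          (measurable_mrep N)
      have hMub : AEEqFun.mk Mf hMfm.aestronglyMeasurable ∈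
          upperBounds {a | ∃ y : E, nrm y ≤ 1 ∧ a = L0abs (g y)} := by
        rintro a ⟨y, hy, rfl⟩
        apply le_of_ae
        filter_upwards [le_ae (hN.1 ⟨y, hy, rfl⟩), mrep_ae N, mrep_ae (L0abs (g y)),
          measure_eq_zero_iff_ae_notMem.1 (hPy y hy),
          AEEqFun.coeFn_mk Mf hMfm.aestronglyMeasurable] with ω h1 h2 h3 h4 h5
        rw [h5]
        by_cases hω : ω ∈ A \ Binf
        · rw [hMfdef, Set.piecewise_eq_of_mem _ _ _ hω]
          have hnB : ω ∉ Bset y := fun hB => h4 (Set.mem_diff ω |>.2 ⟨hB, hω.2⟩)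
          have hnlt : ¬ (c * mrep N ω < mrep (L0abs (g y)) ω) := fun hlt => hnB (by
            rw [hBsetdef]; exact ⟨hω.1, hlt⟩)
          rw [h3]
          linarith [not_lt.1 hnlt]
        · rw [hMfdef, Set.piecewise_eq_of_notMem _ _ _ hω, ← h2]
          exact h1
      have hNM := hN.2 hMub
      have hae : ∀ᵐ ω ∂P, ω ∉ A \ Binf := by
        filter_upwards [le_ae hNM, hbig, mrep_ae N,
          AEEqFun.coeFn_mk Mf hMfm.aestronglyMeasurable] with ω h1 h2 h3 h4
        intro hω
        rw [h4, hMfdef, Set.piecewise_eq_of_mem _ _ _ hω] at h1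
        have h5 := h2 hω.1
        rw [h3] at h1 h5
        nlinarith [h1, h5, hc1]
      exact measure_eq_zero_iff_ae_notMem.2 hae
    -- the partition
    set C : ℕ → Set Ω := disjointed (fun n => Bset (z n).1) with hCdef
    have hCm : ∀ n, MeasurableSet (C n) := MeasurableSet.disjointed fun n => hBm _
    have hCA : ∀ k, C k ⊆ A := fun k ω hω => (disjointed_subset _ k hω).1
    set D : ℕ → Set Ω := fun n => Nat.casesOn n (⋃ k, C k)ᶜ C with hDdef
    have hD : IsMPartition D := by
      have hDC : ∀ k, D (k + 1) = C k := fun k => by rw [hDdef]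
      have hD0 : D 0 = (⋃ k, C k)ᶜ := by rw [hDdef]; rfl
      refine ⟨?_, ?_, ?_⟩
      · intro n
        cases n with
        | zero => rw [hD0]; exact (MeasurableSet.iUnion hCm).compl
        | succ k => rw [hDC]; exact hCm k
      · intro i j hij
        show Disjoint (D i) (D j)
        match i, j, hij with
        | 0, 0, hij => exact absurd rfl hij
        | 0, (j+1), _ =>
          rw [hD0, hDC]
          exact disjoint_compl_left.mono_right (Set.subset_iUnion C j)
        | (i+1), 0, _ =>
          rw [hD0, hDC]
          exact (disjoint_compl_left.mono_right (Set.subset_iUnion C i)).symm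
        | (i+1), (j+1), hij =>
          rw [hDC, hDC, hCdef]
          exact disjoint_disjointed _ (fun h => hij (by rw [h]))
      · apply Set.eq_univ_iff_forall.2
        intro ω
        by_cases hω : ω ∈ ⋃ k, C k
        · obtain ⟨k, hk⟩ := Set.mem_iUnion.1 hω
          refine Set.mem_iUnion.2 ⟨k + 1, ?_⟩
          rw [hDC]
          exact hk
        · refine Set.mem_iUnion.2 ⟨0, ?_⟩
          rw [hD0]
          exact hω
    set lam : ℕ → (Ω →ₘ[P] ℂ) :=
      fun k => indC (C k) (hCm k) * ofRealC N * L0inv (g (z k).1) with hlamdef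
    set m : ℕ → E := fun n => Nat.casesOn n 0 (fun k => lam k • (z k).1) with hmdef
    obtain ⟨x0, hx0⟩ := hccp D hD m
    -- pointwise facts
    have hptn : ∀ᵐ ω ∂P, ∀ n, ω ∈ D n → (nrm x0) ω = (nrm (m n)) ω := by
      rw [ae_all_iff]
      intro n
      have h1 : L0abs (indC (P := P) (D n) (hD.meas n)) * nrm x0
          = L0abs (indC (P := P) (D n) (hD.meas n)) * nrm (m n) := by
        rw [← hnrm.smul_eq, ← hnrm.smul_eq, hx0 n]
      have h2 : ∀ ω, (L0abs (indC (P := P) (D n) (hD.meas n)) * nrm x0) ω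
          = (L0abs (indC (P := P) (D n) (hD.meas n)) * nrm (m n)) ω := fun ω => by rw [h1]
      filter_upwards [mul_ae (L0abs (indC (P := P) (D n) (hD.meas n))) (nrm x0),
        mul_ae (L0abs (indC (P := P) (D n) (hD.meas n))) (nrm (m n)),
        L0abs_indC_ae (D n) (hD.meas n)] with ω ha hb hc
      intro hω
      have hd := h2 ω
      rw [ha, hb, hc, Set.indicator_of_mem hω] at hd
      simpa using hd
    have hptg : ∀ᵐ ω ∂P, ∀ n, ω ∈ D n → (g x0) ω = (g (m n)) ω := by
      rw [ae_all_iff]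
      intro n
      have h1 := congrArg g (hx0 n)
      rw [LinearMap.map_smul, LinearMap.map_smul, smul_eq_mul, smul_eq_mul] at h1
      have h2 : ∀ ω, (indC (P := P) (D n) (hD.meas n) * g x0) ω
          = (indC (P := P) (D n) (hD.meas n) * g (m n)) ω := fun ω => by rw [h1]
      filter_upwards [mul_ae (indC (P := P) (D n) (hD.meas n)) (g x0),
        mul_ae (indC (P := P) (D n) (hD.meas n)) (g (m n)),
        indC_ae (D n) (hD.meas n)] with ω ha hb hc
      intro hω
      have hd := h2 ω
      rw [ha, hb, hc, Set.indicator_of_mem hω] at hd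
      simpa using hd
    have hmk : ∀ᵐ ω ∂P, ∀ k, (nrm (m (k + 1))) ω = ‖(lam k) ω‖ * (nrm (z k).1) ω := by
      rw [ae_all_iff]
      intro k
      have h0 : m (k + 1) = lam k • (z k).1 := by rw [hmdef]
      have h1 : nrm (m (k + 1)) = L0abs (lam k) * nrm ((z k).1) := by
        rw [h0, hnrm.smul_eq]
      have h2 : ∀ ω, (nrm (m (k + 1))) ω = (L0abs (lam k) * nrm (z k).1) ω :=
        fun ω => by rw [h1]
      filter_upwards [mul_ae (L0abs (lam k)) (nrm (z k).1), L0abs_ae (lam k)] with ω ha hb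
      rw [h2 ω, ha, hb]
    have hlamae : ∀ᵐ ω ∂P, ∀ k,
        (lam k) ω = (C k).indicator (fun _ => (1 : ℂ)) ω * ((mrep N ω : ℝ) : ℂ)
          * (((g (z k).1) ω)⁻¹) := by
      rw [ae_all_iff]
      intro k
      have h1 : ∀ ω, (lam k) ω
          = (indC (P := P) (C k) (hCm k) * ofRealC N * L0inv (g (z k).1)) ω :=
        fun ω => by rw [hlamdef]
      filter_upwards [mul_ae (indC (P := P) (C k) (hCm k) * ofRealC N) (L0inv (g (z k).1)),
        mul_ae (indC (P := P) (C k) (hCm k)) (ofRealC N), indC_ae (C k) (hCm k),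
        ofRealC_ae N, L0inv_ae (g (z k).1), mrep_ae N] with ω ha hb hc hd he hf
      rw [h1 ω, ha, hb, hc, hd, he, hf]
    have hak : ∀ᵐ ω ∂P, ∀ k, ω ∈ C k →
        c * mrep N ω < ‖(g (z k).1) ω‖ := by
      rw [ae_all_iff]
      intro k
      filter_upwards [mrep_ae (L0abs (g (z k).1)), L0abs_ae (g (z k).1)] with ω h1 h2
      intro hk
      rw [hCdef] at hk
      have hB : ω ∈ Bset (z k).1 := disjointed_subset _ k hk
      rw [hBsetdef] at hB
      have h3 : c * mrep N ω < mrep (L0abs (g (z k).1)) ω := hB.2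
      rw [← h1, h2] at h3
      exact h3
    have hnormk : ∀ᵐ ω ∂P, ∀ k, (nrm (z k).1) ω ≤ 1 ∧ 0 ≤ (nrm (z k).1) ω := by
      rw [ae_all_iff]
      intro k
      filter_upwards [le_ae (z k).2, le_ae (hnrm.nonneg (z k).1), one_ae (P := P) ℝ,
        zero_ae (P := P) ℝ] with ω h1 h2 h3 h4
      rw [h3] at h1
      rw [h4] at h2
      exact ⟨h1, h2⟩
    have hNb : ∀ᵐ ω ∂P, ω ∈ A → 1 + δ < mrep N ω := by
      filter_upwards [hbig, mrep_ae N] with ω h1 h2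
      intro hω
      rw [← h2]
      exact h1 hω
    have hm0 : ∀ᵐ ω ∂P, (nrm (m 0)) ω = 0 := by
      have h1 : m 0 = 0 := by rw [hmdef]; rfl
      have h2 : nrm (m 0) = (0 : Ω →ₘ[P] ℝ) := by
        rw [h1]; exact (hnrm.eq_zero_iff 0).2 rfl
      filter_upwards [zero_ae (P := P) ℝ] with ω h
      rw [h2, h]
    have hgm0 : ∀ᵐ ω ∂P, (g (m 0)) ω = 0 := by
      have h1 : m 0 = 0 := by rw [hmdef]; rfl
      have h2 : g (m 0) = (0 : Ω →ₘ[P] ℂ) := by rw [h1, map_zero]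
      filter_upwards [zero_ae (P := P) ℂ] with ω h
      rw [h2, h]
    have hgmk : ∀ᵐ ω ∂P, ∀ k, (g (m (k + 1))) ω = (lam k) ω * ((g (z k).1) ω) := by
      rw [ae_all_iff]
      intro k
      have h0 : m (k + 1) = lam k • (z k).1 := by rw [hmdef]
      have h1 : g (m (k + 1)) = lam k * g (z k).1 := by
        rw [h0, LinearMap.map_smul, smul_eq_mul]
      filter_upwards [mul_ae (lam k) (g (z k).1)] with ω ha
      rw [h1, ha]
    have hD0A : ∀ᵐ ω ∂P, ω ∈ A → ω ∈ ⋃ k, C k := by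
      have hCU : (⋃ k, C k) = Binf := by
        rw [hCdef, hBinfdef]
        exact iUnion_disjointed
      filter_upwards [measure_eq_zero_iff_ae_notMem.1 hAB] with ω h
      intro hω
      rw [hCU]
      by_contra hB
      exact h ⟨hω, hB⟩
    refine ⟨x0, ?_, ?_⟩
    · apply le_of_ae
      filter_upwards [hptn, hmk, hlamae, hak, hnormk, hNb, mrep_ae N,
        AEEqFun.coeFn_smul (1 + δ / 2) (indR (P := P) A hA), indR_ae A hA, hm0]
        with ω Hn Hmk Hlam Hak Hnrm HNb HmN Hsm Hind Hm0
      rw [Hsm, Pi.smul_apply, Hind, smul_eq_mul]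
      by_cases hω : ω ∈ ⋃ k, C k
      · obtain ⟨k, hk⟩ := Set.mem_iUnion.1 hω
        have hAmem : ω ∈ A := hCA k hk
        have h1 : (nrm x0) ω = (nrm (m (k + 1))) ω := Hn (k + 1) hk
        have htpos : 0 < mrep N ω := lt_trans (by linarith) (HNb hAmem)
        have hG : c * mrep N ω < ‖(g (z k).1) ω‖ := Hak k hk
        have hGpos : 0 < ‖(g (z k).1) ω‖ := lt_trans (by positivity) hG
        have habs : ‖(lam k) ω‖
            = mrep N ω * (‖(g (z k).1) ω‖)⁻¹ := by
          rw [Hlam k, Set.indicator_of_mem hk]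
          rw [norm_mul, norm_mul, norm_inv, Complex.norm_real, Real.norm_eq_abs, abs_of_pos htpos]
          simp
        have hlt : ‖(lam k) ω‖ ≤ 1 + δ / 2 := by
          rw [habs]
          have hinv : (‖(g (z k).1) ω‖)⁻¹ ≤ (c * mrep N ω)⁻¹ :=
            (inv_le_inv₀ hGpos (by positivity)).2 hG.le
          calc mrep N ω * (‖(g (z k).1) ω‖)⁻¹
              ≤ mrep N ω * (c * mrep N ω)⁻¹ := by
                exact mul_le_mul_of_nonneg_left hinv htpos.le
            _ = c⁻¹ := by field_simp
            _ = 1 + δ / 2 := by rw [hcdef, inv_inv]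
        rw [h1, Hmk k, Set.indicator_of_mem hAmem, mul_one]
        calc ‖(lam k) ω‖ * (nrm (z k).1) ω
            ≤ (1 + δ / 2) * 1 := by
              apply mul_le_mul hlt (Hnrm k).1 (Hnrm k).2 (by linarith)
          _ = 1 + δ / 2 := mul_one _
      · have hD0 : ω ∈ D 0 := hω
        rw [Hn 0 hD0, Hm0]
        have : (0:ℝ) ≤ A.indicator (fun _ => (1:ℝ)) ω := Set.indicator_nonneg (by intros; norm_num) ω
        nlinarith
    · apply AEEqFun.ext
      filter_upwards [hptg, hgmk, hlamae, hak, hNb, mrep_ae N, hgm0, hD0A,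
        mul_ae (indC (P := P) A hA) (ofRealC N), indC_ae A hA, ofRealC_ae N]
        with ω Hg Hgmk Hlam Hak HNb HmN Hg0 HD0A Hmul Hind Hreal
      rw [Hmul, Hind, Hreal]
      by_cases hω : ω ∈ ⋃ k, C k
      · obtain ⟨k, hk⟩ := Set.mem_iUnion.1 hω
        have hAmem : ω ∈ A := hCA k hk
        have htpos : 0 < mrep N ω := lt_trans (by linarith) (HNb hAmem)
        have hG : c * mrep N ω < ‖(g (z k).1) ω‖ := Hak k hk
        have hGne : ((g (z k).1) ω) ≠ 0 := by
          intro h0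
          rw [h0] at hG
          simp at hG
          nlinarith
        rw [Hg (k + 1) hk, Hgmk k, Hlam k, Set.indicator_of_mem hk,
          Set.indicator_of_mem hAmem]
        rw [HmN]
        field_simp
      · have hD0 : ω ∈ D 0 := hω
        have hnA : ω ∉ A := fun h => hω (HD0A h)
        rw [Hg 0 hD0, Hg0, Set.indicator_of_notMem hnA, zero_mul]
end
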